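/- arXiv:2202.01864 — 6 statements merged into one kernel-verified Lean document; each statement's English description precedes it below -/
import Mathlib

section
/- Let Z, U, ε_X, ε_Y be independent standard Gaussian random variables and for τ ∈ ℝ define K_τ := U + τ·Z·U + τ·ε_X + ε_Y. If Z is independent of K_τ, then τ = 0. (Consequently, in the SCM X := Z·U + ε_X, Y := X + U + ε_Y, the causal coefficient θ⁰ = 1 is identifiable from the independence restriction Z ⟂⟂ Y − θX, even though it is not identifiable from any moment restriction.) -/
open MeasureTheory ProbabilityTheory

open Real Nat
open scoped NNReal ENNReal

lemma gauss_pdf01 (x : ℝ) :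
    gaussianPDFReal 0 1 x = (Real.sqrt (2 * π))⁻¹ * Real.exp (-(1/2) * x ^ 2) := by
  unfold gaussianPDFReal
  simp only [NNReal.coe_one, mul_one, sub_zero]
  congr 1
  ring_nf

lemma gauss_integrable_core (n : ℕ) :
    Integrable (fun x : ℝ => x ^ n * Real.exp (-(1/2) * x ^ 2)) := by
  have h := (integrable_exp_neg_mul_sq (show (0:ℝ) < 1/4 by norm_num)).const_mul
    ((n ! : ℝ) * Real.exp 1)
  refine h.mono' ?_ (ae_of_all _ fun x => ?_)
  · exact ((continuous_pow n).mul (by continuity)).aestronglyMeasurable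
  · have hexp : |x| ^ n / n ! ≤ Real.exp |x| := by
      refine le_trans ?_ (Real.sum_le_exp_of_nonneg (abs_nonneg x) (n+1))
      exact Finset.single_le_sum (f := fun i => |x| ^ i / i !)
        (fun i _ => by positivity) (Finset.self_mem_range_succ n)
    have h1 : |x| ^ n ≤ n ! * Real.exp |x| := by
      have hn : (0:ℝ) < n ! := by positivity
      rw [div_le_iff₀ hn] at hexp
      linarith [hexp]
    have h2 : Real.exp |x| * Real.exp (-(1/2) * x^2) ≤ Real.exp 1 * Real.exp (-(1/4) * x^2) := by
      rw [← Real.exp_add, ← Real.exp_add]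
      apply Real.exp_le_exp.mpr
      nlinarith [sq_abs x, sq_nonneg (|x| - 2)]
    calc ‖x ^ n * Real.exp (-(1/2) * x ^ 2)‖ = |x| ^ n * Real.exp (-(1/2) * x^2) := by
          rw [norm_mul, norm_pow, Real.norm_eq_abs, Real.norm_eq_abs, Real.abs_exp]
      _ ≤ (n ! * Real.exp |x|) * Real.exp (-(1/2) * x^2) :=
          mul_le_mul_of_nonneg_right h1 (Real.exp_nonneg _)
      _ = n ! * (Real.exp |x| * Real.exp (-(1/2)*x^2)) := by ring
      _ ≤ n ! * (Real.exp 1 * Real.exp (-(1/4) * x^2)) :=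
          mul_le_mul_of_nonneg_left h2 (by positivity)
      _ = n ! * Real.exp 1 * Real.exp (-(1/4) * x^2) := by ring

lemma gauss_integral_eq (g : ℝ → ℝ) :
    ∫ x, g x ∂(gaussianReal 0 1) = ∫ x, gaussianPDFReal 0 1 x * g x := by
  rw [gaussianReal_of_var_ne_zero _ one_ne_zero]
  have : gaussianPDF 0 1 = fun x => ((Real.toNNReal (gaussianPDFReal 0 1 x) : ℝ≥0) : ℝ≥0∞) := by
    funext x; rfl
  rw [this, integral_withDensity_eq_integral_smul
    ((measurable_gaussianPDFReal 0 1).real_toNNReal) g]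
  congr 1
  funext x
  rw [NNReal.smul_def, smul_eq_mul, Real.coe_toNNReal _ (gaussianPDFReal_nonneg _ _ _)]

lemma gauss_integrable_pow (n : ℕ) :
    Integrable (fun x : ℝ => x ^ n) (gaussianReal 0 1) := by
  rw [gaussianReal_of_var_ne_zero _ one_ne_zero]
  rw [integrable_withDensity_iff (measurable_gaussianPDF 0 1)
    (ae_of_all _ fun x => ENNReal.ofReal_lt_top)]
  have : (fun x : ℝ => x ^ n * (gaussianPDF 0 1 x).toReal)
      = fun x => (Real.sqrt (2 * π))⁻¹ * (x ^ n * Real.exp (-(1/2) * x ^ 2)) := by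
    funext x
    rw [gaussianPDF, ENNReal.toReal_ofReal (gaussianPDFReal_nonneg _ _ _), gauss_pdf01]
    ring
  rw [this]
  exact (gauss_integrable_core n).const_mul _

lemma gauss_pdf01_even (x : ℝ) : gaussianPDFReal 0 1 (-x) = gaussianPDFReal 0 1 x := by
  rw [gauss_pdf01, gauss_pdf01, neg_pow]
  ring_nf

lemma gauss_moment_odd {n : ℕ} (hn : Odd n) :
    ∫ x, x ^ n ∂(gaussianReal 0 1) = 0 := by
  rw [gauss_integral_eq]
  set f : ℝ → ℝ := fun x => gaussianPDFReal 0 1 x * x ^ n with hf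
  have hodd : ∀ x, f (-x) = - f x := by
    intro x
    simp only [hf, gauss_pdf01_even, hn.neg_pow]
    ring
  have h1 : ∫ x, f x = ∫ x, f (-x) := (integral_neg_eq_self f volume).symm
  have h2 : ∫ x, f (-x) = - ∫ x, f x := by
    simp_rw [hodd]
    exact integral_neg f
  linarith [h1, h2]

lemma gauss_moment_one : ∫ x, x ∂(gaussianReal 0 1) = 0 := by
  have := gauss_moment_odd (n := 1) (odd_one)
  simpa using this

lemma gauss_moment_three : ∫ x, x ^ 3 ∂(gaussianReal 0 1) = 0 :=
  gauss_moment_odd ⟨1, by norm_num⟩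

lemma gauss_sq_exp_Ioi :
    ∫ x in Set.Ioi (0:ℝ), x ^ 2 * Real.exp (-(1/2) * x ^ 2) = Real.sqrt (2 * π) / 2 := by
  have h := integral_rpow_mul_exp_neg_mul_rpow (p := 2) (q := 2) (b := 1/2)
    (by norm_num) (by norm_num) (by norm_num)
  have heq : ∫ x in Set.Ioi (0:ℝ), x ^ (2:ℝ) * Real.exp (-(1/2) * x ^ (2:ℝ))
      = ∫ x in Set.Ioi (0:ℝ), x ^ 2 * Real.exp (-(1/2) * x ^ 2) := by
    refine setIntegral_congr_fun measurableSet_Ioi (fun x _ => ?_)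
    rw [show ((2:ℝ)) = ((2:ℕ):ℝ) by norm_num, Real.rpow_natCast]
  rw [heq] at h
  rw [h]
  have hG : Real.Gamma ((2 + 1) / 2) = Real.sqrt π / 2 := by
    rw [show ((2:ℝ) + 1) / 2 = 1/2 + 1 by norm_num, Real.Gamma_add_one (by norm_num),
      Real.Gamma_one_half_eq]
    ring
  rw [hG]
  have hb : ((1:ℝ)/2) ^ (-((2:ℝ) + 1) / 2) = 2 * Real.sqrt 2 := by
    rw [show ((1:ℝ)/2) = (2:ℝ)⁻¹ by norm_num,
      Real.inv_rpow (by norm_num : (0:ℝ) ≤ 2),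
      show (-((2:ℝ)+1)/2) = -(3/2) by norm_num,
      Real.rpow_neg (by norm_num : (0:ℝ) ≤ 2), inv_inv,
      show ((3:ℝ)/2) = 1 + 1/2 by norm_num,
      Real.rpow_add (by norm_num), Real.rpow_one, ← Real.sqrt_eq_rpow]
  rw [hb]
  rw [show Real.sqrt (2 * π) = Real.sqrt 2 * Real.sqrt π from Real.sqrt_mul (by norm_num) _]
  ring

lemma gauss_moment_two : ∫ x, x ^ 2 ∂(gaussianReal 0 1) = 1 := by
  rw [gauss_integral_eq]
  have h1 : ∀ x : ℝ, gaussianPDFReal 0 1 x * x ^ 2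
      = (Real.sqrt (2 * π))⁻¹ * (x ^ 2 * Real.exp (-(1/2) * x ^ 2)) := by
    intro x; rw [gauss_pdf01]; ring
  simp_rw [h1]
  rw [integral_const_mul]
  have h2 : ∫ x : ℝ, x ^ 2 * Real.exp (-(1/2) * x ^ 2)
      = 2 * ∫ x in Set.Ioi (0:ℝ), x ^ 2 * Real.exp (-(1/2) * x ^ 2) := by
    rw [← integral_comp_abs (f := fun x => x ^ 2 * Real.exp (-(1/2) * x ^ 2))]
    congr 1
    funext x
    rw [sq_abs]
  rw [h2, gauss_sq_exp_Ioi]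
  have hpos : (0:ℝ) < Real.sqrt (2 * π) := Real.sqrt_pos.mpr (by positivity)
  field_simp

lemma omega_mom {Ω : Type*} [MeasurableSpace Ω] {μ : Measure Ω} {X : Ω → ℝ}
    (hXm : Measurable X) (hX : Measure.map X μ = gaussianReal 0 1) (n : ℕ) :
    ∫ ω, X ω ^ n ∂μ = ∫ x, x ^ n ∂(gaussianReal 0 1) := by
  rw [← hX]
  exact (integral_map hXm.aemeasurable
    (measurable_id.pow_const n).aestronglyMeasurable).symm

lemma omega_int {Ω : Type*} [MeasurableSpace Ω] {μ : Measure Ω} {X : Ω → ℝ}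
    (hXm : Measurable X) (hX : Measure.map X μ = gaussianReal 0 1) (n : ℕ) :
    Integrable (fun ω => X ω ^ n) μ := by
  have h := gauss_integrable_pow n
  rw [← hX] at h
  exact (integrable_map_measure (measurable_id.pow_const n).aestronglyMeasurable
    hXm.aemeasurable).mp h

lemma indep_integral_mul' {Ω : Type*} [MeasurableSpace Ω] {μ : Measure Ω} {X Y : Ω → ℝ}
    (h : IndepFun X Y μ) (hX : AEStronglyMeasurable X μ) (hY : AEStronglyMeasurable Y μ) :
    ∫ ω, X ω * Y ω ∂μ = (∫ ω, X ω ∂μ) * ∫ ω, Y ω ∂μ :=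
  h.integral_mul_eq_mul_integral hX hY

/-- For independent standard Gaussians `Z, U, ε_X, ε_Y` and
`K_τ := U + τ·Z·U + τ·ε_X + ε_Y`, independence of `Z` and `K_τ` forces `τ = 0`. -/
theorem statement4 {Ω : Type*} [MeasurableSpace Ω] (μ : Measure Ω) [IsProbabilityMeasure μ]
    (Z U εX εY : Ω → ℝ)
    (hZm : Measurable Z) (hUm : Measurable U) (hεXm : Measurable εX) (hεYm : Measurable εY)
    (hindep : iIndepFun ![Z, U, εX, εY] μ)
    (hZ : Measure.map Z μ = gaussianReal 0 1)
    (hU : Measure.map U μ = gaussianReal 0 1)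
    (hεX : Measure.map εX μ = gaussianReal 0 1)
    (hεY : Measure.map εY μ = gaussianReal 0 1)
    (τ : ℝ)
    (hindepK : IndepFun Z (fun ω => U ω + τ * Z ω * U ω + τ * εX ω + εY ω) μ) :
    τ = 0 := by
  set K : Ω → ℝ := fun ω => U ω + τ * Z ω * U ω + τ * εX ω + εY ω with hK
  have hKm : Measurable K :=
    ((hUm.add ((measurable_const.mul hZm).mul hUm)).add (measurable_const.mul hεXm)).add hεYm
  have hfmeas : ∀ i, Measurable (![Z, U, εX, εY] i) := fun i => by fin_cases i <;> assumption
  -- moments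
  have mZ1 : ∫ ω, Z ω ∂μ = 0 := by
    have := omega_mom hZm hZ 1; simpa [gauss_moment_one] using this
  have mZ2 : ∫ ω, Z ω ^ 2 ∂μ = 1 := by rw [omega_mom hZm hZ 2, gauss_moment_two]
  have mZ3 : ∫ ω, Z ω ^ 3 ∂μ = 0 := by rw [omega_mom hZm hZ 3, gauss_moment_three]
  have mU2 : ∫ ω, U ω ^ 2 ∂μ = 1 := by rw [omega_mom hUm hU 2, gauss_moment_two]
  have mεX1 : ∫ ω, εX ω ∂μ = 0 := by
    have := omega_mom hεXm hεX 1; simpa [gauss_moment_one] using this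
  have mεY1 : ∫ ω, εY ω ∂μ = 0 := by
    have := omega_mom hεYm hεY 1; simpa [gauss_moment_one] using this
  -- integrability of powers
  have iZ1 : Integrable (fun ω => Z ω) μ := by simpa using omega_int hZm hZ 1
  have iZ2 : Integrable (fun ω => Z ω ^ 2) μ := omega_int hZm hZ 2
  have iZ3 : Integrable (fun ω => Z ω ^ 3) μ := omega_int hZm hZ 3
  have iU1 : Integrable (fun ω => U ω) μ := by simpa using omega_int hUm hU 1
  have iU2 : Integrable (fun ω => U ω ^ 2) μ := omega_int hUm hU 2
  have iεX1 : Integrable (fun ω => εX ω) μ := by simpa using omega_int hεXm hεX 1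
  have iεX2 : Integrable (fun ω => εX ω ^ 2) μ := omega_int hεXm hεX 2
  have iεY1 : Integrable (fun ω => εY ω) μ := by simpa using omega_int hεYm hεY 1
  have iεY2 : Integrable (fun ω => εY ω ^ 2) μ := omega_int hεYm hεY 2
  -- pairwise independence
  have hZU : IndepFun Z U μ := hindep.indepFun (show (0:Fin 4) ≠ 1 by decide)
  have hZεX : IndepFun Z εX μ := hindep.indepFun (show (0:Fin 4) ≠ 2 by decide)
  have hZεY : IndepFun Z εY μ := hindep.indepFun (show (0:Fin 4) ≠ 3 by decide)
  have hZ1U2 : IndepFun (fun ω => Z ω) (fun ω => U ω ^ 2) μ :=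
    hZU.comp measurable_id (measurable_id.pow_const 2)
  have hZ3U2 : IndepFun (fun ω => Z ω ^ 3) (fun ω => U ω ^ 2) μ :=
    hZU.comp (measurable_id.pow_const 3) (measurable_id.pow_const 2)
  have hZ1εX2 : IndepFun (fun ω => Z ω) (fun ω => εX ω ^ 2) μ :=
    hZεX.comp measurable_id (measurable_id.pow_const 2)
  have hZ1εY2 : IndepFun (fun ω => Z ω) (fun ω => εY ω ^ 2) μ :=
    hZεY.comp measurable_id (measurable_id.pow_const 2)
  have hZ2U2 : IndepFun (fun ω => Z ω ^ 2) (fun ω => U ω ^ 2) μ :=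
    hZU.comp (measurable_id.pow_const 2) (measurable_id.pow_const 2)
  have hZ2U1 : IndepFun (fun ω => Z ω ^ 2) (fun ω => U ω) μ :=
    hZU.comp (measurable_id.pow_const 2) measurable_id
  have hZU_εX : IndepFun (fun ω => Z ω * U ω) εX μ :=
    hindep.indepFun_mul_left hfmeas 0 1 2 (by decide) (by decide)
  have hZU_εY : IndepFun (fun ω => Z ω * U ω) εY μ :=
    hindep.indepFun_mul_left hfmeas 0 1 3 (by decide) (by decide)
  have hZεX_εY : IndepFun (fun ω => Z ω * εX ω) εY μ :=
    hindep.indepFun_mul_left hfmeas 0 2 3 (by decide) (by decide)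
  have hZ2U_εX : IndepFun (fun ω => Z ω ^ 2 * U ω) εX μ := by
    have h := (hindep.indepFun_prodMk hfmeas 0 1 2 (by decide) (by decide)).comp
      (show Measurable (fun p : ℝ × ℝ => p.1 ^ 2 * p.2) by fun_prop) measurable_id
    exact h
  have hZ2U_εY : IndepFun (fun ω => Z ω ^ 2 * U ω) εY μ := by
    have h := (hindep.indepFun_prodMk hfmeas 0 1 3 (by decide) (by decide)).comp
      (show Measurable (fun p : ℝ × ℝ => p.1 ^ 2 * p.2) by fun_prop) measurable_id
    exact h
  -- measurability facts
  have msZ : AEStronglyMeasurable Z μ := hZm.aestronglyMeasurable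
  have msZ2 : AEStronglyMeasurable (fun ω => Z ω ^ 2) μ := (hZm.pow_const 2).aestronglyMeasurable
  have msZ3 : AEStronglyMeasurable (fun ω => Z ω ^ 3) μ := (hZm.pow_const 3).aestronglyMeasurable
  have msU2 : AEStronglyMeasurable (fun ω => U ω ^ 2) μ := (hUm.pow_const 2).aestronglyMeasurable
  have msεX2 : AEStronglyMeasurable (fun ω => εX ω ^ 2) μ :=
    (hεXm.pow_const 2).aestronglyMeasurable
  have msεY2 : AEStronglyMeasurable (fun ω => εY ω ^ 2) μ :=
    (hεYm.pow_const 2).aestronglyMeasurable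
  have msZU : AEStronglyMeasurable (fun ω => Z ω * U ω) μ := (hZm.mul hUm).aestronglyMeasurable
  have msZ2U : AEStronglyMeasurable (fun ω => Z ω ^ 2 * U ω) μ :=
    ((hZm.pow_const 2).mul hUm).aestronglyMeasurable
  have msZεX : AEStronglyMeasurable (fun ω => Z ω * εX ω) μ := (hZm.mul hεXm).aestronglyMeasurable
  -- values of the ten term integrals
  have v1 : ∫ ω, Z ω * U ω ^ 2 ∂μ = 0 := by
    rw [indep_integral_mul' hZ1U2 msZ msU2, mZ1, zero_mul]
  have v2 : ∫ ω, Z ω ^ 3 * U ω ^ 2 ∂μ = 0 := by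
    rw [indep_integral_mul' hZ3U2 msZ3 msU2, mZ3, zero_mul]
  have v3 : ∫ ω, Z ω * εX ω ^ 2 ∂μ = 0 := by
    rw [indep_integral_mul' hZ1εX2 msZ msεX2, mZ1, zero_mul]
  have v4 : ∫ ω, Z ω * εY ω ^ 2 ∂μ = 0 := by
    rw [indep_integral_mul' hZ1εY2 msZ msεY2, mZ1, zero_mul]
  have v5 : ∫ ω, Z ω ^ 2 * U ω ^ 2 ∂μ = 1 := by
    rw [indep_integral_mul' hZ2U2 msZ2 msU2, mZ2, mU2, mul_one]
  have v6 : ∫ ω, (Z ω * U ω) * εX ω ∂μ = 0 := by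
    rw [indep_integral_mul' hZU_εX msZU hεXm.aestronglyMeasurable, mεX1, mul_zero]
  have v7 : ∫ ω, (Z ω * U ω) * εY ω ∂μ = 0 := by
    rw [indep_integral_mul' hZU_εY msZU hεYm.aestronglyMeasurable, mεY1, mul_zero]
  have v8 : ∫ ω, (Z ω ^ 2 * U ω) * εX ω ∂μ = 0 := by
    rw [indep_integral_mul' hZ2U_εX msZ2U hεXm.aestronglyMeasurable, mεX1, mul_zero]
  have v9 : ∫ ω, (Z ω ^ 2 * U ω) * εY ω ∂μ = 0 := by
    rw [indep_integral_mul' hZ2U_εY msZ2U hεYm.aestronglyMeasurable, mεY1, mul_zero]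
  have v10 : ∫ ω, (Z ω * εX ω) * εY ω ∂μ = 0 := by
    rw [indep_integral_mul' hZεX_εY msZεX hεYm.aestronglyMeasurable, mεY1, mul_zero]
  -- integrability of the ten terms (with coefficients)
  have ig1 : Integrable (fun ω => Z ω * U ω ^ 2) μ := hZ1U2.integrable_mul iZ1 iU2
  have ig2 : Integrable (fun ω => τ ^ 2 * (Z ω ^ 3 * U ω ^ 2)) μ :=
    (hZ3U2.integrable_mul iZ3 iU2).const_mul _
  have ig3 : Integrable (fun ω => τ ^ 2 * (Z ω * εX ω ^ 2)) μ :=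
    (hZ1εX2.integrable_mul iZ1 iεX2).const_mul _
  have ig4 : Integrable (fun ω => Z ω * εY ω ^ 2) μ := hZ1εY2.integrable_mul iZ1 iεY2
  have ig5 : Integrable (fun ω => 2 * τ * (Z ω ^ 2 * U ω ^ 2)) μ :=
    (hZ2U2.integrable_mul iZ2 iU2).const_mul _
  have iZU : Integrable (fun ω => Z ω * U ω) μ := hZU.integrable_mul iZ1 iU1
  have iZ2U : Integrable (fun ω => Z ω ^ 2 * U ω) μ := hZ2U1.integrable_mul iZ2 iU1
  have ig6 : Integrable (fun ω => 2 * τ * ((Z ω * U ω) * εX ω)) μ :=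
    (hZU_εX.integrable_mul iZU iεX1).const_mul _
  have ig7 : Integrable (fun ω => 2 * ((Z ω * U ω) * εY ω)) μ :=
    (hZU_εY.integrable_mul iZU iεY1).const_mul _
  have ig8 : Integrable (fun ω => 2 * τ ^ 2 * ((Z ω ^ 2 * U ω) * εX ω)) μ :=
    (hZ2U_εX.integrable_mul iZ2U iεX1).const_mul _
  have ig9 : Integrable (fun ω => 2 * τ * ((Z ω ^ 2 * U ω) * εY ω)) μ :=
    (hZ2U_εY.integrable_mul iZ2U iεY1).const_mul _
  have iZεX : Integrable (fun ω => Z ω * εX ω) μ := hZεX.integrable_mul iZ1 iεX1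
  have ig10 : Integrable (fun ω => 2 * τ * ((Z ω * εX ω) * εY ω)) μ :=
    (hZεX_εY.integrable_mul iZεX iεY1).const_mul _
  -- the expansion
  have hEexp : ∫ ω, Z ω * K ω ^ 2 ∂μ = 2 * τ := by
    have hpt : (fun ω => Z ω * K ω ^ 2) = fun ω =>
        Z ω * U ω ^ 2 + τ ^ 2 * (Z ω ^ 3 * U ω ^ 2) + τ ^ 2 * (Z ω * εX ω ^ 2)
          + Z ω * εY ω ^ 2 + 2 * τ * (Z ω ^ 2 * U ω ^ 2) + 2 * τ * ((Z ω * U ω) * εX ω)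
          + 2 * ((Z ω * U ω) * εY ω) + 2 * τ ^ 2 * ((Z ω ^ 2 * U ω) * εX ω)
          + 2 * τ * ((Z ω ^ 2 * U ω) * εY ω) + 2 * τ * ((Z ω * εX ω) * εY ω) := by
      funext ω; rw [hK]; ring
    have hA2 : Integrable (fun ω => Z ω * U ω ^ 2 + τ ^ 2 * (Z ω ^ 3 * U ω ^ 2)) μ := by exact (ig1.add ig2)
    have hA3 : Integrable (fun ω => Z ω * U ω ^ 2 + τ ^ 2 * (Z ω ^ 3 * U ω ^ 2) + τ ^ 2 * (Z ω * εX ω ^ 2)) μ := by exact ((ig1.add ig2).add ig3)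
    have hA4 : Integrable (fun ω => Z ω * U ω ^ 2 + τ ^ 2 * (Z ω ^ 3 * U ω ^ 2) + τ ^ 2 * (Z ω * εX ω ^ 2) + Z ω * εY ω ^ 2) μ := by exact (((ig1.add ig2).add ig3).add ig4)
    have hA5 : Integrable (fun ω => Z ω * U ω ^ 2 + τ ^ 2 * (Z ω ^ 3 * U ω ^ 2) + τ ^ 2 * (Z ω * εX ω ^ 2) + Z ω * εY ω ^ 2 + 2 * τ * (Z ω ^ 2 * U ω ^ 2)) μ := by exact ((((ig1.add ig2).add ig3).add ig4).add ig5)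
    have hA6 : Integrable (fun ω => Z ω * U ω ^ 2 + τ ^ 2 * (Z ω ^ 3 * U ω ^ 2) + τ ^ 2 * (Z ω * εX ω ^ 2) + Z ω * εY ω ^ 2 + 2 * τ * (Z ω ^ 2 * U ω ^ 2) + 2 * τ * ((Z ω * U ω) * εX ω)) μ := by exact (((((ig1.add ig2).add ig3).add ig4).add ig5).add ig6)
    have hA7 : Integrable (fun ω => Z ω * U ω ^ 2 + τ ^ 2 * (Z ω ^ 3 * U ω ^ 2) + τ ^ 2 * (Z ω * εX ω ^ 2) + Z ω * εY ω ^ 2 + 2 * τ * (Z ω ^ 2 * U ω ^ 2) + 2 * τ * ((Z ω * U ω) * εX ω) + 2 * ((Z ω * U ω) * εY ω)) μ := by exact ((((((ig1.add ig2).add ig3).add ig4).add ig5).add ig6).add ig7)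
    have hA8 : Integrable (fun ω => Z ω * U ω ^ 2 + τ ^ 2 * (Z ω ^ 3 * U ω ^ 2) + τ ^ 2 * (Z ω * εX ω ^ 2) + Z ω * εY ω ^ 2 + 2 * τ * (Z ω ^ 2 * U ω ^ 2) + 2 * τ * ((Z ω * U ω) * εX ω) + 2 * ((Z ω * U ω) * εY ω) + 2 * τ ^ 2 * ((Z ω ^ 2 * U ω) * εX ω)) μ := by exact (((((((ig1.add ig2).add ig3).add ig4).add ig5).add ig6).add ig7).add ig8)
    have hA9 : Integrable (fun ω => Z ω * U ω ^ 2 + τ ^ 2 * (Z ω ^ 3 * U ω ^ 2) + τ ^ 2 * (Z ω * εX ω ^ 2) + Z ω * εY ω ^ 2 + 2 * τ * (Z ω ^ 2 * U ω ^ 2) + 2 * τ * ((Z ω * U ω) * εX ω) + 2 * ((Z ω * U ω) * εY ω) + 2 * τ ^ 2 * ((Z ω ^ 2 * U ω) * εX ω) + 2 * τ * ((Z ω ^ 2 * U ω) * εY ω)) μ := by exact ((((((((ig1.add ig2).add ig3).add ig4).add ig5).add ig6).add ig7).add ig8).add ig9)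
    rw [hpt,
      integral_add hA9 ig10, integral_add hA8 ig9, integral_add hA7 ig8,
      integral_add hA6 ig7, integral_add hA5 ig6, integral_add hA4 ig5,
      integral_add hA3 ig4, integral_add hA2 ig3, integral_add ig1 ig2]
    rw [integral_const_mul, integral_const_mul, integral_const_mul, integral_const_mul,
      integral_const_mul, integral_const_mul, integral_const_mul, integral_const_mul,
      v1, v2, v3, v4, v5, v6, v7, v8, v9, v10]
    ring
  -- independence gives zero
  have hEzero : ∫ ω, Z ω * K ω ^ 2 ∂μ = 0 := by
    have h := indep_integral_mul' (hindepK.comp measurable_id (measurable_id.pow_const 2))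
      hZm.aestronglyMeasurable (hKm.pow_const 2).aestronglyMeasurable
    calc ∫ ω, Z ω * K ω ^ 2 ∂μ = (∫ ω, Z ω ∂μ) * ∫ ω, K ω ^ 2 ∂μ := h
      _ = 0 := by rw [mZ1, zero_mul]
  rw [hEzero] at hEexp
  linarith
end

section
/- Let Z be a random variable taking almost surely values in a finite set S ⊆ ℝ^r with |S| = k, let X be an ℝ^d-valued random variable, let φ : ℝ^d → ℝ^p be measurable with φ(X) integrable and p > k, and let η : ℝ^r → ℝ^q be any function such that η(Z)φ(X)ᵀ is entrywise integrable. Then the matrix M := E[η(Z)φ(X)ᵀ] ∈ ℝ^{q×p} has rank at most k; in particular there exists τ ∈ ℝ^p with τ ≠ 0 and M τ = 0, so the moment identifiability condition fails for every choice of η. -/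
open MeasureTheory ProbabilityTheory Matrix

/-- If the instrument `Z` takes a.s. values in a finite set `S` of cardinality `k`
and `p > k`, then for any `η` the moment matrix `M = E[η(Z)φ(X)ᵀ]` has rank at most `k`; in
particular some `τ ≠ 0` satisfies `Mτ = 0`, so moment identifiability fails. -/
theorem statement5 {Ω : Type*} [MeasurableSpace Ω] (μ : Measure Ω) [IsProbabilityMeasure μ]
    {r d p q k : ℕ} (Z : Ω → (Fin r → ℝ)) (X : Ω → (Fin d → ℝ))
    (S : Finset (Fin r → ℝ)) (hScard : S.card = k)
    (hZS : ∀ᵐ ω ∂μ, Z ω ∈ S)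
    (φ : (Fin d → ℝ) → (Fin p → ℝ)) (hφ : Measurable φ)
    (hφXint : ∀ j, Integrable (fun ω => φ (X ω) j) μ)
    (hpk : p > k)
    (η : (Fin r → ℝ) → (Fin q → ℝ))
    (hint : ∀ i j, Integrable (fun ω => η (Z ω) i * φ (X ω) j) μ) :
    (Matrix.of fun i j => ∫ ω, η (Z ω) i * φ (X ω) j ∂μ).rank ≤ k ∧
      ∃ τ : Fin p → ℝ, τ ≠ 0 ∧
        (Matrix.of fun i j => ∫ ω, η (Z ω) i * φ (X ω) j ∂μ).mulVec τ = 0 := by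
  set M : Matrix (Fin q) (Fin p) ℝ :=
    Matrix.of fun i j => ∫ ω, η (Z ω) i * φ (X ω) j ∂μ with hM
  set A : Matrix {x // x ∈ S} (Fin q) ℝ := Matrix.of fun s i => η s.1 i with hA
  have hker : LinearMap.ker A.mulVecLin ≤ LinearMap.ker M.transpose.mulVecLin := by
    intro c hc
    rw [LinearMap.mem_ker, Matrix.mulVecLin_apply] at hc ⊢
    have hc' : ∀ s ∈ S, ∑ i, c i * η s i = 0 := by
      intro s hs
      have := congrFun hc ⟨s, hs⟩
      simpa [Matrix.mulVec, dotProduct, hA, mul_comm] using this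
    funext j
    have hzero : (fun ω => ∑ i, c i * (η (Z ω) i * φ (X ω) j)) =ᵐ[μ]
        (fun _ => (0 : ℝ)) := by
      filter_upwards [hZS] with ω hω
      have : ∑ i, c i * (η (Z ω) i * φ (X ω) j)
          = (∑ i, c i * η (Z ω) i) * φ (X ω) j := by
        rw [Finset.sum_mul]; exact Finset.sum_congr rfl fun i _ => by ring
      rw [this, hc' _ hω, zero_mul]
    have hsum : ∑ i, c i * ∫ ω, η (Z ω) i * φ (X ω) j ∂μ = 0 := by
      have : ∑ i, ∫ ω, c i * (η (Z ω) i * φ (X ω) j) ∂μ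
          = ∫ ω, ∑ i, c i * (η (Z ω) i * φ (X ω) j) ∂μ := by
        rw [integral_finset_sum]
        intro i _
        exact (hint i j).const_mul (c i)
      have h2 : ∫ ω, ∑ i, c i * (η (Z ω) i * φ (X ω) j) ∂μ = 0 := by
        rw [integral_congr_ae hzero, integral_zero]
      calc ∑ i, c i * ∫ ω, η (Z ω) i * φ (X ω) j ∂μ
          = ∑ i, ∫ ω, c i * (η (Z ω) i * φ (X ω) j) ∂μ := by
            exact Finset.sum_congr rfl fun i _ => (MeasureTheory.integral_const_mul _ _).symm
        _ = 0 := by rw [this, h2]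
    simpa [Matrix.mulVec, dotProduct, hM, mul_comm] using hsum
  have hfd : FiniteDimensional ℝ (Fin q → ℝ) := inferInstance
  have hkerle := Submodule.finrank_mono hker
  have h1 := LinearMap.finrank_range_add_finrank_ker A.mulVecLin
  have h2 := LinearMap.finrank_range_add_finrank_ker M.transpose.mulVecLin
  have hrankA : A.rank ≤ k := by
    have := Matrix.rank_le_card_height A
    simpa [Fintype.card_coe, hScard] using this
  have hMt : M.transpose.rank ≤ k := by
    have hAr : A.rank = Module.finrank ℝ (LinearMap.range A.mulVecLin) := rfl
    have hMr : M.transpose.rank = Module.finrank ℝ (LinearMap.range M.transpose.mulVecLin) := rfl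
    omega
  have hrank : M.rank ≤ k := by
    rw [← Matrix.rank_transpose]; exact hMt
  refine ⟨hrank, ?_⟩
  have h3 := LinearMap.finrank_range_add_finrank_ker M.mulVecLin
  have hfp : Module.finrank ℝ (Fin p → ℝ) = p := by simp
  have hMrk : M.rank = Module.finrank ℝ (LinearMap.range M.mulVecLin) := rfl
  have hkerpos : 0 < Module.finrank ℝ (LinearMap.ker M.mulVecLin) := by omega
  have hne : LinearMap.ker M.mulVecLin ≠ ⊥ := by
    intro h
    rw [h] at hkerpos
    simp at hkerpos
  obtain ⟨τ, hτmem, hτne⟩ := Submodule.exists_mem_ne_zero_of_ne_bot hne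
  exact ⟨τ, hτne, hτmem⟩
end

section
/- Let Z be Bernoulli(1/2)-distributed and let U, ε_X be standard Gaussian, with Z, U, ε_X jointly independent, and set X := 2·Z·U − U + ε_X. Then Z and X are independent; in particular, Z is independent of τ·X for every τ ∈ ℝ. (Conditionally on Z = 1, X = U + ε_X, and conditionally on Z = 0, X = −U + ε_X; both are N(0,2).) -/
open MeasureTheory ProbabilityTheory

/-- With `Z ~ Bernoulli(1/2)`, `U, ε_X` standard Gaussian, all jointly
independent, and `X := 2·Z·U − U + ε_X`: `Z` and `X` are independent, and in particular `Z`
is independent of `τ·X` for every `τ`. -/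
theorem statement9 {Ω : Type*} [MeasurableSpace Ω] (μ : Measure Ω) [IsProbabilityMeasure μ]
    (Z U εX : Ω → ℝ)
    (hZm : Measurable Z) (hUm : Measurable U) (hεXm : Measurable εX)
    (hindep : iIndepFun ![Z, U, εX] μ)
    (hZ1 : μ {ω | Z ω = 1} = 1/2) (hZ0 : μ {ω | Z ω = 0} = 1/2)
    (hU : Measure.map U μ = gaussianReal 0 1)
    (hεX : Measure.map εX μ = gaussianReal 0 1) :
    IndepFun Z (fun ω => 2 * Z ω * U ω - U ω + εX ω) μ ∧
      ∀ τ : ℝ, IndepFun Z (fun ω => τ * (2 * Z ω * U ω - U ω + εX ω)) μ := by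
  set X : Ω → ℝ := fun ω => 2 * Z ω * U ω - U ω + εX ω with hXdef
  set V : Ω → ℝ := fun ω => U ω + εX ω with hVdef
  set W : Ω → ℝ := fun ω => -U ω + εX ω with hWdef
  have hXm : Measurable X := (((measurable_const.mul hZm).mul hUm).sub hUm).add hεXm
  have hVm : Measurable V := hUm.add hεXm
  have hWm : Measurable W := hUm.neg.add hεXm
  have hmeas : ∀ i, Measurable (![Z, U, εX] i) := by
    intro i
    fin_cases i <;> simpa using by first | exact hZm | exact hUm | exact hεXm
  -- independence of Z with the pair (U, εX)
  have hpair : IndepFun Z (fun ω => (U ω, εX ω)) μ := by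
    have := (hindep.indepFun_prodMk hmeas 1 2 0 (by decide) (by decide)).symm
    simpa using this
  have hZV : IndepFun Z V μ :=
    hpair.comp measurable_id (measurable_fst.add measurable_snd)
  have hZW : IndepFun Z W μ :=
    hpair.comp measurable_id (measurable_fst.neg.add measurable_snd)
  -- independence of U and εX
  have hUε : IndepFun U εX μ := hindep.indepFun (i := 1) (j := 2) (by decide)
  have hUε' : IndepFun (fun ω => -U ω) εX μ :=
    hUε.comp measurable_neg measurable_id
  -- law of -U
  have hnegU : Measure.map (fun ω => -U ω) μ = gaussianReal 0 1 := by
    have h1 : (fun ω => -U ω) = (fun x : ℝ => (-1 : ℝ) * x) ∘ U := by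
      funext ω; simp
    rw [h1, ← Measure.map_map (measurable_const_mul (-1 : ℝ)) hUm, hU]
    have := gaussianReal_map_const_mul (μ := 0) (v := 1) (-1 : ℝ)
    simpa using this
  -- V and W have the same law
  have hlawVW : Measure.map V μ = Measure.map W μ := by
    have hV2 : Measure.map V μ
        = Measure.map (fun p : ℝ × ℝ => p.1 + p.2) (Measure.map (fun ω => (U ω, εX ω)) μ) := by
      rw [Measure.map_map (g := fun p : ℝ × ℝ => p.1 + p.2) (measurable_fst.add measurable_snd) (hUm.prodMk hεXm)]
      rfl
    have hW2 : Measure.map W μ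
        = Measure.map (fun p : ℝ × ℝ => p.1 + p.2)
            (Measure.map (fun ω => (-U ω, εX ω)) μ) := by
      rw [Measure.map_map (g := fun p : ℝ × ℝ => p.1 + p.2) (f := fun ω => (-U ω, εX ω))
        (measurable_fst.add measurable_snd) (hUm.neg.prodMk hεXm)]
      rfl
    have hp1 : Measure.map (fun ω => (U ω, εX ω)) μ
        = (Measure.map U μ).prod (Measure.map εX μ) :=
      (indepFun_iff_map_prod_eq_prod_map_map hUm.aemeasurable hεXm.aemeasurable).mp hUε
    have hp2 : Measure.map (fun ω => (-U ω, εX ω)) μ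
        = (Measure.map (fun ω => -U ω) μ).prod (Measure.map εX μ) :=
      (indepFun_iff_map_prod_eq_prod_map_map hUm.neg.aemeasurable hεXm.aemeasurable).mp hUε'
    rw [hV2, hW2, hp1, hp2, hU, hnegU]
  have hlaw : ∀ t : Set ℝ, MeasurableSet t → μ (V ⁻¹' t) = μ (W ⁻¹' t) := by
    intro t ht
    rw [← Measure.map_apply hVm ht, ← Measure.map_apply hWm ht, hlawVW]
  -- the two atoms of Z
  set A1 : Set Ω := Z ⁻¹' {1} with hA1def
  set A0 : Set Ω := Z ⁻¹' {0} with hA0def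
  have hA1m : MeasurableSet A1 := hZm (measurableSet_singleton 1)
  have hA0m : MeasurableSet A0 := hZm (measurableSet_singleton 0)
  have hμA1 : μ A1 = 1/2 := hZ1
  have hμA0 : μ A0 = 1/2 := hZ0
  have hdisj : Disjoint A1 A0 := by
    rw [Set.disjoint_left]
    rintro ω (h1 : Z ω = 1) (h0 : Z ω = 0)
    rw [h1] at h0; norm_num at h0
  have hunion : μ (A1 ∪ A0) = 1 := by
    rw [measure_union hdisj hA0m, hμA1, hμA0, ENNReal.add_halves]
  have hcompl : μ ((A1 ∪ A0)ᶜ) = 0 := by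
    rw [measure_compl (hA1m.union hA0m) (measure_ne_top μ _), hunion, measure_univ, tsub_self]
  -- splitting any measurable set along the atoms
  have hsplit : ∀ T : Set Ω, MeasurableSet T → μ T = μ (T ∩ A1) + μ (T ∩ A0) := by
    intro T hT
    have h1 : μ T = μ (T ∩ (A1 ∪ A0)) + μ (T \ (A1 ∪ A0)) :=
      (measure_inter_add_diff T (hA1m.union hA0m)).symm
    have h2 : μ (T \ (A1 ∪ A0)) = 0 :=
      measure_mono_null (Set.diff_subset_compl T (A1 ∪ A0)) hcompl
    have h3 : T ∩ (A1 ∪ A0) = (T ∩ A1) ∪ (T ∩ A0) := Set.inter_union_distrib_left T A1 A0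
    have h4 : μ ((T ∩ A1) ∪ (T ∩ A0)) = μ (T ∩ A1) + μ (T ∩ A0) :=
      measure_union (hdisj.mono Set.inter_subset_right Set.inter_subset_right) (hT.inter hA0m)
    rw [h1, h2, add_zero, h3, h4]
  -- X agrees with V on A1 and with W on A0
  have hXA1 : ∀ t : Set ℝ, X ⁻¹' t ∩ A1 = V ⁻¹' t ∩ A1 := by
    intro t
    ext ω
    simp only [Set.mem_inter_iff, Set.mem_preimage, Set.mem_singleton_iff, hA1def]
    constructor <;> rintro ⟨h, hz⟩ <;> refine ⟨?_, hz⟩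
    · have : X ω = V ω := by simp only [hXdef, hVdef, hz]; ring
      rwa [← this]
    · have : X ω = V ω := by simp only [hXdef, hVdef, hz]; ring
      rwa [this]
  have hXA0 : ∀ t : Set ℝ, X ⁻¹' t ∩ A0 = W ⁻¹' t ∩ A0 := by
    intro t
    ext ω
    simp only [Set.mem_inter_iff, Set.mem_preimage, Set.mem_singleton_iff, hA0def]
    constructor <;> rintro ⟨h, hz⟩ <;> refine ⟨?_, hz⟩
    · have : X ω = W ω := by simp only [hXdef, hWdef, hz]; ring
      rwa [← this]
    · have : X ω = W ω := by simp only [hXdef, hWdef, hz]; ring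
      rwa [this]
  -- key measure computations
  have hV1 : ∀ t : Set ℝ, MeasurableSet t → μ (V ⁻¹' t ∩ A1) = 1/2 * μ (V ⁻¹' t) := by
    intro t ht
    rw [Set.inter_comm, hA1def,
      hZV.measure_inter_preimage_eq_mul {1} t (measurableSet_singleton 1) ht, hμA1]
  have hW0 : ∀ t : Set ℝ, MeasurableSet t → μ (W ⁻¹' t ∩ A0) = 1/2 * μ (W ⁻¹' t) := by
    intro t ht
    rw [Set.inter_comm, hA0def,
      hZW.measure_inter_preimage_eq_mul {0} t (measurableSet_singleton 0) ht, hμA0]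
  have hXt : ∀ t : Set ℝ, MeasurableSet t → μ (X ⁻¹' t) = μ (V ⁻¹' t) := by
    intro t ht
    rw [hsplit _ (hXm ht), hXA1, hXA0, hV1 t ht, hW0 t ht, ← hlaw t ht, ← add_mul,
      ENNReal.add_halves, one_mul]
  -- the main independence statement
  have hmain : IndepFun Z X μ := by
    rw [indepFun_iff_measure_inter_preimage_eq_mul]
    intro s t hs ht
    have hXtm : MeasurableSet (X ⁻¹' t) := hXm ht
    have hZs : μ (Z ⁻¹' s) = μ (Z ⁻¹' s ∩ A1) + μ (Z ⁻¹' s ∩ A0) := hsplit _ (hZm hs)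
    have hZsT : μ (Z ⁻¹' s ∩ X ⁻¹' t)
        = μ (Z ⁻¹' s ∩ X ⁻¹' t ∩ A1) + μ (Z ⁻¹' s ∩ X ⁻¹' t ∩ A0) :=
      hsplit _ ((hZm hs).inter hXtm)
    by_cases h1 : (1 : ℝ) ∈ s <;> by_cases h0 : (0 : ℝ) ∈ s
    · -- both
      have e1 : Z ⁻¹' s ∩ A1 = A1 := by
        ext ω; simp only [Set.mem_inter_iff, Set.mem_preimage, hA1def, Set.mem_singleton_iff]
        exact ⟨fun h => h.2, fun h => ⟨h ▸ h1, h⟩⟩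
      have e0 : Z ⁻¹' s ∩ A0 = A0 := by
        ext ω; simp only [Set.mem_inter_iff, Set.mem_preimage, hA0def, Set.mem_singleton_iff]
        exact ⟨fun h => h.2, fun h => ⟨h ▸ h0, h⟩⟩
      have eZ : μ (Z ⁻¹' s) = 1 := by rw [hZs, e1, e0, hμA1, hμA0, ENNReal.add_halves]
      have eT1 : Z ⁻¹' s ∩ X ⁻¹' t ∩ A1 = X ⁻¹' t ∩ A1 := by
        rw [Set.inter_assoc, Set.inter_comm (X ⁻¹' t), ← Set.inter_assoc, e1, Set.inter_comm]
      have eT0 : Z ⁻¹' s ∩ X ⁻¹' t ∩ A0 = X ⁻¹' t ∩ A0 := by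
        rw [Set.inter_assoc, Set.inter_comm (X ⁻¹' t), ← Set.inter_assoc, e0, Set.inter_comm]
      rw [hZsT, eT1, eT0, ← hsplit _ hXtm, eZ, one_mul]
    · -- only 1 ∈ s
      have e1 : Z ⁻¹' s ∩ A1 = A1 := by
        ext ω; simp only [Set.mem_inter_iff, Set.mem_preimage, hA1def, Set.mem_singleton_iff]
        exact ⟨fun h => h.2, fun h => ⟨h ▸ h1, h⟩⟩
      have e0 : Z ⁻¹' s ∩ A0 = ∅ := by
        ext ω; simp only [Set.mem_inter_iff, Set.mem_preimage, hA0def, Set.mem_singleton_iff,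
          Set.mem_empty_iff_false, iff_false, not_and]
        intro hzs hz0; exact h0 (hz0 ▸ hzs)
      have eZ : μ (Z ⁻¹' s) = 1/2 := by rw [hZs, e1, e0, hμA1, measure_empty, add_zero]
      have eT1 : Z ⁻¹' s ∩ X ⁻¹' t ∩ A1 = X ⁻¹' t ∩ A1 := by
        rw [Set.inter_assoc, Set.inter_comm (X ⁻¹' t), ← Set.inter_assoc, e1, Set.inter_comm]
      have eT0 : Z ⁻¹' s ∩ X ⁻¹' t ∩ A0 = ∅ := by
        rw [Set.inter_assoc, Set.inter_comm (X ⁻¹' t), ← Set.inter_assoc, e0,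
          Set.empty_inter]
      rw [hZsT, eT1, eT0, measure_empty, add_zero, hXA1, hV1 t ht, eZ, hXt t ht]
    · -- only 0 ∈ s
      have e1 : Z ⁻¹' s ∩ A1 = ∅ := by
        ext ω; simp only [Set.mem_inter_iff, Set.mem_preimage, hA1def, Set.mem_singleton_iff,
          Set.mem_empty_iff_false, iff_false, not_and]
        intro hzs hz1; exact h1 (hz1 ▸ hzs)
      have e0 : Z ⁻¹' s ∩ A0 = A0 := by
        ext ω; simp only [Set.mem_inter_iff, Set.mem_preimage, hA0def, Set.mem_singleton_iff]
        exact ⟨fun h => h.2, fun h => ⟨h ▸ h0, h⟩⟩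
      have eZ : μ (Z ⁻¹' s) = 1/2 := by rw [hZs, e1, e0, hμA0, measure_empty, zero_add]
      have eT1 : Z ⁻¹' s ∩ X ⁻¹' t ∩ A1 = ∅ := by
        rw [Set.inter_assoc, Set.inter_comm (X ⁻¹' t), ← Set.inter_assoc, e1,
          Set.empty_inter]
      have eT0 : Z ⁻¹' s ∩ X ⁻¹' t ∩ A0 = X ⁻¹' t ∩ A0 := by
        rw [Set.inter_assoc, Set.inter_comm (X ⁻¹' t), ← Set.inter_assoc, e0, Set.inter_comm]
      rw [hZsT, eT1, eT0, measure_empty, zero_add, hXA0, hW0 t ht, eZ, hXt t ht,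
        hlaw t ht]
    · -- neither
      have e1 : Z ⁻¹' s ∩ A1 = ∅ := by
        ext ω; simp only [Set.mem_inter_iff, Set.mem_preimage, hA1def, Set.mem_singleton_iff,
          Set.mem_empty_iff_false, iff_false, not_and]
        intro hzs hz1; exact h1 (hz1 ▸ hzs)
      have e0 : Z ⁻¹' s ∩ A0 = ∅ := by
        ext ω; simp only [Set.mem_inter_iff, Set.mem_preimage, hA0def, Set.mem_singleton_iff,
          Set.mem_empty_iff_false, iff_false, not_and]
        intro hzs hz0; exact h0 (hz0 ▸ hzs)
      have eZ : μ (Z ⁻¹' s) = 0 := by rw [hZs, e1, e0, measure_empty, add_zero]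
      have hsub : μ (Z ⁻¹' s ∩ X ⁻¹' t) = 0 :=
        measure_mono_null Set.inter_subset_left eZ
      rw [hsub, eZ, zero_mul]
  refine ⟨hmain, fun τ => ?_⟩
  exact hmain.comp measurable_id (measurable_id.const_mul τ)
end

section
/- Let Z be Bernoulli(1/2)-distributed and let U, ε_X, ε_Y be standard Gaussian, with Z, U, ε_X, ε_Y jointly independent, and set X := 2·Z·U + ε_X. Then Z is independent of X − U + ε_Y. (Conditionally on Z = 1 this variable equals U + ε_X + ε_Y and conditionally on Z = 0 it equals −U + ε_X + ε_Y; both are N(0,3). Hence in the model Y := X − U + ε_Y the independence identifiability condition fails at τ = 1.) -/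
open MeasureTheory ProbabilityTheory

/-- With `Z ~ Bernoulli(1/2)`, `U, ε_X, ε_Y` standard Gaussian, all jointly
independent, and `X := 2·Z·U + ε_X`: `Z` is independent of `X − U + ε_Y`. -/
theorem statement11 {Ω : Type*} [MeasurableSpace Ω] (μ : Measure Ω) [IsProbabilityMeasure μ]
    (Z U εX εY : Ω → ℝ)
    (hZm : Measurable Z) (hUm : Measurable U) (hεXm : Measurable εX) (hεYm : Measurable εY)
    (hindep : iIndepFun ![Z, U, εX, εY] μ)
    (hZ1 : μ {ω | Z ω = 1} = 1/2) (hZ0 : μ {ω | Z ω = 0} = 1/2)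
    (hU : Measure.map U μ = gaussianReal 0 1)
    (hεX : Measure.map εX μ = gaussianReal 0 1)
    (hεY : Measure.map εY μ = gaussianReal 0 1) :
    IndepFun Z (fun ω => (2 * Z ω * U ω + εX ω) - U ω + εY ω) μ := by
  classical
  set W : Ω → ℝ := fun ω => (2 * Z ω * U ω + εX ω) - U ω + εY ω with hWdef
  set Sf : Ω → ℝ := fun ω => εX ω + εY ω with hSfdef
  set V1 : Ω → ℝ := fun ω => U ω + Sf ω with hV1def
  set V0 : Ω → ℝ := fun ω => -U ω + Sf ω with hV0def
  have hmeas : ∀ i, Measurable (![Z, U, εX, εY] i) := by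
    intro i
    fin_cases i <;> simpa using ‹_›
  have hSm : Measurable Sf := hεXm.add hεYm
  have hV1m : Measurable V1 := hUm.add hSm
  have hV0m : Measurable V0 := hUm.neg.add hSm
  have hWm : Measurable W := (((hZm.const_mul 2).mul hUm).add hεXm).sub hUm |>.add hεYm
  -- independence of U and Sf
  have hUS : IndepFun U Sf μ := by
    have := hindep.indepFun_add_right hmeas 1 2 3 (by decide) (by decide)
    exact (by simpa using this : IndepFun U (εX + εY) μ)
  have hnegUS : IndepFun (fun ω => -U ω) Sf μ :=
    hUS.comp measurable_neg measurable_id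
  -- law of -U
  have hnegU : Measure.map (fun ω => -U ω) μ = gaussianReal 0 1 := by
    have h1 : (fun ω => -U ω) = (fun x : ℝ => -x) ∘ U := rfl
    rw [h1, ← Measure.map_map measurable_neg hUm, hU]
    have h2 : (Neg.neg : ℝ → ℝ) = ((-1 : ℝ) * ·) := by funext x; simp [neg_one_mul]
    rw [h2, gaussianReal_map_const_mul]
    norm_num
  -- laws of V1 and V0 coincide
  have hlaw : Measure.map V0 μ = Measure.map V1 μ := by
    have hp1 : Measure.map (fun ω => (U ω, Sf ω)) μ
        = (Measure.map U μ).prod (Measure.map Sf μ) :=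
      (indepFun_iff_map_prod_eq_prod_map_map hUm.aemeasurable hSm.aemeasurable).mp hUS
    have hp0 : Measure.map (fun ω => (-U ω, Sf ω)) μ
        = (Measure.map (fun ω => -U ω) μ).prod (Measure.map Sf μ) :=
      (indepFun_iff_map_prod_eq_prod_map_map hUm.neg.aemeasurable hSm.aemeasurable).mp hnegUS
    have hadd : Measurable (fun p : ℝ × ℝ => p.1 + p.2) :=
      measurable_fst.add measurable_snd
    have e1 : Measure.map V1 μ
        = (Measure.map (fun ω => (U ω, Sf ω)) μ).map (fun p : ℝ × ℝ => p.1 + p.2) := by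
      rw [Measure.map_map hadd (hUm.prodMk hSm)]; rfl
    have e0 : Measure.map V0 μ
        = (Measure.map (fun ω => (-U ω, Sf ω)) μ).map (fun p : ℝ × ℝ => p.1 + p.2) := by
      rw [Measure.map_map (f := fun ω => (-U ω, Sf ω)) hadd (hUm.neg.prodMk hSm)]; rfl
    rw [e0, e1, hp0, hp1, hnegU, hU]
  set ν : Measure ℝ := Measure.map V1 μ with hνdef
  -- independence of Z with V1 and V0
  have hbase : IndepFun (fun a (i : ({0} : Finset (Fin 4))) => ![Z, U, εX, εY] i a)
      (fun a (i : ({1, 2, 3} : Finset (Fin 4))) => ![Z, U, εX, εY] i a) μ :=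
    hindep.indepFun_finset {0} {1, 2, 3} (by decide) hmeas
  have hψ1 : Measurable fun v : ({1, 2, 3} : Finset (Fin 4)) → ℝ =>
      v ⟨1, by decide⟩ + (v ⟨2, by decide⟩ + v ⟨3, by decide⟩) := by fun_prop
  have hψ0 : Measurable fun v : ({1, 2, 3} : Finset (Fin 4)) → ℝ =>
      -v ⟨1, by decide⟩ + (v ⟨2, by decide⟩ + v ⟨3, by decide⟩) := by fun_prop
  have hφ : Measurable fun v : ({0} : Finset (Fin 4)) → ℝ => v ⟨0, by decide⟩ :=
    measurable_pi_apply _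
  have hZV1 : IndepFun Z V1 μ := hbase.comp hφ hψ1
  have hZV0 : IndepFun Z V0 μ := hbase.comp hφ hψ0
  -- the events Z = 1 and Z = 0
  set s1 : Set Ω := Z ⁻¹' {1} with hs1def
  set s0 : Set Ω := Z ⁻¹' {0} with hs0def
  have hs1m : MeasurableSet s1 := hZm (measurableSet_singleton 1)
  have hs0m : MeasurableSet s0 := hZm (measurableSet_singleton 0)
  have hμ1 : μ s1 = 1/2 := by rw [hs1def]; exact hZ1
  have hμ0 : μ s0 = 1/2 := by rw [hs0def]; exact hZ0
  have hdisj : Disjoint s1 s0 := by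
    rw [Set.disjoint_left]
    rintro ω (h1 : Z ω = 1) (h0 : Z ω = 0)
    exact one_ne_zero (h1 ▸ h0)
  have hnull : μ (s1 ∪ s0)ᶜ = 0 := by
    have hu : μ (s1 ∪ s0) = 1 := by
      rw [measure_union hdisj hs0m, hμ1, hμ0, ENNReal.add_halves]
    rw [measure_compl (hs1m.union hs0m) (measure_ne_top _ _), hu, measure_univ, tsub_self]
  -- decomposition of measures
  have hdecomp : ∀ A : Set Ω, MeasurableSet A → μ A = μ (A ∩ s1) + μ (A ∩ s0) := by
    intro A hA
    have h1 : μ A = μ (A ∩ (s1 ∪ s0)) := (measure_inter_conull hnull).symm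
    rw [h1, Set.inter_union_distrib_left,
      measure_union (hdisj.mono Set.inter_subset_right Set.inter_subset_right) (hA.inter hs0m)]
  -- pointwise identification of W on s1 and s0
  have hset1 : ∀ t : Set ℝ, s1 ∩ W ⁻¹' t = s1 ∩ V1 ⁻¹' t := by
    intro t
    ext ω
    refine and_congr_right fun h => ?_
    have hz : Z ω = 1 := h
    have hW : W ω = V1 ω := by
      simp only [hWdef, hV1def, hSfdef]; rw [hz]; ring
    simp [Set.mem_preimage, hW]
  have hset0 : ∀ t : Set ℝ, s0 ∩ W ⁻¹' t = s0 ∩ V0 ⁻¹' t := by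
    intro t
    ext ω
    refine and_congr_right fun h => ?_
    have hz : Z ω = 0 := h
    have hW : W ω = V0 ω := by
      simp only [hWdef, hV0def, hSfdef]; rw [hz]; ring
    simp [Set.mem_preimage, hW]
  -- the key half-measure computations
  rw [indepFun_iff_measure_inter_preimage_eq_mul] at hZV1 hZV0
  have key1 : ∀ t : Set ℝ, MeasurableSet t → μ (s1 ∩ W ⁻¹' t) = (1/2 : ENNReal) * ν t := by
    intro t ht
    rw [hset1 t, hs1def, hZV1 {1} t (measurableSet_singleton 1) ht, ← hs1def, hμ1,
      hνdef, Measure.map_apply hV1m ht]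
  have key0 : ∀ t : Set ℝ, MeasurableSet t → μ (s0 ∩ W ⁻¹' t) = (1/2 : ENNReal) * ν t := by
    intro t ht
    rw [hset0 t, hs0def, hZV0 {0} t (measurableSet_singleton 0) ht, ← hs0def, hμ0,
      ← Measure.map_apply hV0m ht, hlaw]
  have hWt : ∀ t : Set ℝ, MeasurableSet t → μ (W ⁻¹' t) = ν t := by
    intro t ht
    rw [hdecomp _ (hWm ht), Set.inter_comm _ s1, Set.inter_comm _ s0, key1 t ht, key0 t ht,
      ← add_mul, ENNReal.add_halves, one_mul]
  -- main computation
  rw [indepFun_iff_measure_inter_preimage_eq_mul]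
  intro s t hs ht
  have hZs : MeasurableSet (Z ⁻¹' s) := hZm hs
  have hZsub1 : (1 : ℝ) ∈ s → s1 ⊆ Z ⁻¹' s := by
    intro h1 ω hω
    have : Z ω = 1 := hω
    simpa [Set.mem_preimage, this] using h1
  have hZsub0 : (0 : ℝ) ∈ s → s0 ⊆ Z ⁻¹' s := by
    intro h0 ω hω
    have : Z ω = 0 := hω
    simpa [Set.mem_preimage, this] using h0
  have hZemp1 : (1 : ℝ) ∉ s → Z ⁻¹' s ∩ s1 = ∅ := by
    intro h1
    ext ω
    simp only [Set.mem_inter_iff, Set.mem_empty_iff_false, iff_false, not_and]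
    intro hω hω1
    exact h1 ((show Z ω = 1 from hω1) ▸ hω)
  have hZemp0 : (0 : ℝ) ∉ s → Z ⁻¹' s ∩ s0 = ∅ := by
    intro h0
    ext ω
    simp only [Set.mem_inter_iff, Set.mem_empty_iff_false, iff_false, not_and]
    intro hω hω0
    exact h0 ((show Z ω = 0 from hω0) ▸ hω)
  rw [hdecomp _ (hZs.inter (hWm ht)), hdecomp _ hZs, hWt t ht]
  have hc1 : μ (Z ⁻¹' s ∩ W ⁻¹' t ∩ s1)
      = (if (1 : ℝ) ∈ s then (1/2 : ENNReal) * ν t else 0) := by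
    by_cases h1 : (1 : ℝ) ∈ s
    · rw [if_pos h1, ← key1 t ht]
      congr 1
      ext ω
      constructor
      · rintro ⟨⟨_, hw⟩, hz⟩; exact ⟨hz, hw⟩
      · rintro ⟨hz, hw⟩; exact ⟨⟨hZsub1 h1 hz, hw⟩, hz⟩
    · rw [if_neg h1]
      refine measure_mono_null (fun ω => ?_) (by simp [hZemp1 h1] : μ (Z ⁻¹' s ∩ s1) = 0)
      rintro ⟨⟨hωs, _⟩, hω1⟩; exact ⟨hωs, hω1⟩
  have hc0 : μ (Z ⁻¹' s ∩ W ⁻¹' t ∩ s0)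
      = (if (0 : ℝ) ∈ s then (1/2 : ENNReal) * ν t else 0) := by
    by_cases h0 : (0 : ℝ) ∈ s
    · rw [if_pos h0, ← key0 t ht]
      congr 1
      ext ω
      constructor
      · rintro ⟨⟨_, hw⟩, hz⟩; exact ⟨hz, hw⟩
      · rintro ⟨hz, hw⟩; exact ⟨⟨hZsub0 h0 hz, hw⟩, hz⟩
    · rw [if_neg h0]
      refine measure_mono_null (fun ω => ?_) (by simp [hZemp0 h0] : μ (Z ⁻¹' s ∩ s0) = 0)
      rintro ⟨⟨hωs, _⟩, hω0⟩; exact ⟨hωs, hω0⟩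
  have hd1 : μ (Z ⁻¹' s ∩ s1) = (if (1 : ℝ) ∈ s then (1/2 : ENNReal) else 0) := by
    by_cases h1 : (1 : ℝ) ∈ s
    · rw [if_pos h1, Set.inter_eq_right.mpr (hZsub1 h1), hμ1]
    · rw [if_neg h1, hZemp1 h1, measure_empty]
  have hd0 : μ (Z ⁻¹' s ∩ s0) = (if (0 : ℝ) ∈ s then (1/2 : ENNReal) else 0) := by
    by_cases h0 : (0 : ℝ) ∈ s
    · rw [if_pos h0, Set.inter_eq_right.mpr (hZsub0 h0), hμ0]
    · rw [if_neg h0, hZemp0 h0, measure_empty]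
  rw [hc1, hc0, hd1, hd0]
  by_cases h1 : (1 : ℝ) ∈ s <;> by_cases h0 : (0 : ℝ) ∈ s <;>
    simp [h1, h0] <;> ring
end

section
/- Let (Ω, F, P) be a probability space and A, B, G sub-sigma-algebras of F such that A and B are conditionally independent given G. Let ℓ : ℝ → ℝ be convex, let W be an integrable real random variable measurable with respect to the sigma-algebra generated by B and G, and let V be an integrable real random variable measurable with respect to the sigma-algebra generated by A and G. Assume ℓ(W − V) and ℓ(W − E[V | G]) are integrable. Then E[ℓ(W − V)] ≥ E[ℓ(W − E[V | G])]. -/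
open MeasureTheory ProbabilityTheory

section Aux

variable {Ω : Type*}

/-- Multiplying an integrable function by an a.e.-bounded (by 1) measurable function preserves
integrability (bounded factor on the left). -/
lemma aux_int_mul_left {mΩ : MeasurableSpace Ω} {μ : Measure Ω} {f g : Ω → ℝ} (hf : Integrable f μ) (hg : AEStronglyMeasurable g μ)
    (hbd : ∀ᵐ x ∂μ, ‖g x‖ ≤ 1) : Integrable (fun x => g x * f x) μ := by
  refine Integrable.mono' hf.abs (hg.mul hf.aestronglyMeasurable) ?_
  filter_upwards [hbd] with x hx
  calc ‖g x * f x‖ = ‖g x‖ * ‖f x‖ := norm_mul _ _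
    _ ≤ 1 * ‖f x‖ := by gcongr
    _ = |f x| := by rw [one_mul, Real.norm_eq_abs]

/-- Same, bounded factor on the right. -/
lemma aux_int_mul_right {mΩ : MeasurableSpace Ω} {μ : Measure Ω} {f g : Ω → ℝ} (hf : Integrable f μ) (hg : AEStronglyMeasurable g μ)
    (hbd : ∀ᵐ x ∂μ, ‖g x‖ ≤ 1) : Integrable (fun x => f x * g x) μ := by
  have := aux_int_mul_left hf hg hbd
  simpa [mul_comm] using this

/-- The indicator of a measurable set, as a real function, is a.e. bounded by 1. -/
lemma aux_indicator_bd {mΩ : MeasurableSpace Ω} {μ : Measure Ω} (s : Set Ω) :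
    ∀ᵐ x ∂μ, ‖s.indicator (fun _ => (1 : ℝ)) x‖ ≤ 1 := by
  filter_upwards with x
  by_cases hx : x ∈ s <;> simp [Set.indicator_apply, hx]

lemma aux_indicator_sm {m : MeasurableSpace Ω} {s : Set Ω} (hs : MeasurableSet[m] s) :
    StronglyMeasurable[m] (s.indicator (fun _ => (1 : ℝ))) :=
  stronglyMeasurable_const.indicator hs

/-- The conditional expectation of an indicator is a.e. bounded by 1. -/
lemma aux_condexp_indicator_bd {m mΩ : MeasurableSpace Ω} {μ : Measure Ω}
    [IsProbabilityMeasure μ] (hm : m ≤ mΩ) {b : Set Ω} (hb : MeasurableSet[mΩ] b) :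
    ∀ᵐ x ∂μ, ‖(μ⟦b|m⟧) x‖ ≤ 1 := by
  have hint : Integrable (b.indicator fun _ => (1 : ℝ)) μ := (integrable_const 1).indicator hb
  have h0 : 0 ≤ᵐ[μ] μ⟦b|m⟧ :=
    condExp_nonneg (ae_of_all _ fun x => Set.indicator_apply_nonneg fun _ => zero_le_one)
  have h1 : μ⟦b|m⟧ ≤ᵐ[μ] μ[fun _ => (1 : ℝ)|m] := by
    refine condExp_mono hint (integrable_const 1) (ae_of_all _ fun x => ?_)
    by_cases hx : x ∈ b <;> simp [Set.indicator_apply, hx]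
  rw [condExp_const hm] at h1
  filter_upwards [h0, h1] with x hx0 hx1
  simp only [Pi.zero_apply] at hx0
  rw [Real.norm_eq_abs, abs_le]
  exact ⟨by linarith, hx1⟩

/-- Rewrite a set integral as an integral against the indicator. -/
lemma aux_setIntegral_eq {mΩ : MeasurableSpace Ω} {μ : Measure Ω} {s : Set Ω}
    (hs : MeasurableSet[mΩ] s) (f : Ω → ℝ) :
    ∫ x in s, f x ∂μ = ∫ x, s.indicator (fun _ => (1 : ℝ)) x * f x ∂μ := by
  rw [← integral_indicator hs]
  congr 1
  funext x
  by_cases hx : x ∈ s <;> simp [Set.indicator_apply, hx]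

/-- Pull-out property at the level of integrals: for `h` an `m`-measurable function,
`∫ h f = ∫ h E[f|m]`. -/
lemma aux_pullout {m mΩ : MeasurableSpace Ω} {μ : Measure Ω} [IsProbabilityMeasure μ]
    (hm : m ≤ mΩ) {h f : Ω → ℝ} (hh : StronglyMeasurable[m] h)
    (hhf : Integrable (fun x => h x * f x) μ) (hf : Integrable f μ) :
    ∫ x, h x * f x ∂μ = ∫ x, h x * (μ[f|m]) x ∂μ := by
  haveI : SigmaFinite (μ.trim hm) := inferInstance
  have hmul : μ[h * f|m] =ᵐ[μ] h * μ[f|m] := condExp_mul_of_stronglyMeasurable_left hh hhf hf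
  calc ∫ x, h x * f x ∂μ = ∫ x, (μ[h * f|m]) x ∂μ := (integral_condExp hm).symm
    _ = ∫ x, (h * μ[f|m]) x ∂μ := integral_congr_ae hmul
    _ = ∫ x, h x * (μ[f|m]) x ∂μ := rfl

/-- π-system argument: two integrable functions with equal total integral and equal integrals on a
generating π-system have equal integrals on all measurable sets of the generated σ-algebra. -/
lemma aux_setIntegral_eq_of_pi {m mΩ : MeasurableSpace Ω} {μ : Measure Ω} (hm : m ≤ mΩ)
    {pi : Set (Set Ω)} (h_eq : m = MeasurableSpace.generateFrom pi) (hpi : IsPiSystem pi)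
    {f g : Ω → ℝ} (hf : Integrable f μ) (hg : Integrable g μ)
    (htot : ∫ x, f x ∂μ = ∫ x, g x ∂μ)
    (hbasic : ∀ s ∈ pi, ∫ x in s, f x ∂μ = ∫ x in s, g x ∂μ)
    {s : Set Ω} (hs : MeasurableSet[m] s) :
    ∫ x in s, f x ∂μ = ∫ x in s, g x ∂μ := by
  refine @MeasurableSpace.induction_on_inter Ω m
    (fun t _ => ∫ x in t, f x ∂μ = ∫ x in t, g x ∂μ) pi h_eq hpi ?_ hbasic ?_ ?_ s hs
  · simp
  · intro t ht hC
    have htΩ : MeasurableSet[mΩ] t := hm _ ht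
    have h1 := integral_add_compl htΩ hf
    have h2 := integral_add_compl htΩ hg
    have := htot
    linarith
  · intro u hdisj humeas hC
    have h1 := hasSum_integral_iUnion (μ := μ) (f := f) (fun i => hm _ (humeas i)) hdisj
      hf.integrableOn
    have h2 := hasSum_integral_iUnion (μ := μ) (f := g) (fun i => hm _ (humeas i)) hdisj
      hg.integrableOn
    have h1' : HasSum (fun i => ∫ x in u i, g x ∂μ) (∫ x in ⋃ n, u n, f x ∂μ) := by
      refine HasSum.congr_fun h1 fun i => ?_
      exact (hC i).symm
    exact h1'.unique h2

end Aux

section Main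

variable {Ω : Type*}

/-- Conditional Jensen inequality, via the conditional expectation kernel. -/
lemma aux_cond_jensen {m mΩ : MeasurableSpace Ω} [StandardBorelSpace Ω] {μ : Measure Ω}
    [IsProbabilityMeasure μ] (hm : m ≤ mΩ)
    {ℓ : ℝ → ℝ} (hℓ : ConvexOn ℝ Set.univ ℓ) {f : Ω → ℝ} (hf : Integrable f μ)
    (hlf : Integrable (fun ω => ℓ (f ω)) μ) :
    ∀ᵐ ω ∂μ, ℓ ((μ[f|m]) ω) ≤ (μ[fun ω => ℓ (f ω)|m]) ω := by
  filter_upwards [condExp_ae_eq_integral_condExpKernel hm hf,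
    condExp_ae_eq_integral_condExpKernel hm hlf,
    hf.condExpKernel_ae (m := m), hlf.condExpKernel_ae (m := m)] with ω e1 e2 i3 i4
  rw [e1, e2]
  exact hℓ.map_integral_le (hℓ.continuousOn isOpen_univ) isClosed_univ
    (ae_of_all _ fun _ => Set.mem_univ _) i3 i4

/-- Core lemma: if `A ⊥ B | G` then for `b ∈ B`, `E[1_b | A ⊔ G] = E[1_b | G]` a.e. -/
lemma aux_core {A B G mΩ : MeasurableSpace Ω} [StandardBorelSpace Ω] {μ : Measure Ω}
    [IsProbabilityMeasure μ] (hA : A ≤ mΩ) (hB : B ≤ mΩ) (hG : G ≤ mΩ)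
    (hCI : CondIndep G A B hG μ) {b : Set Ω} (hb : MeasurableSet[B] b) :
    (μ⟦b|G⟧) =ᵐ[μ] μ[b.indicator (fun _ => (1 : ℝ))|A ⊔ G] := by
  have hAG : A ⊔ G ≤ mΩ := sup_le hA hG
  have hbΩ : MeasurableSet[mΩ] b := hB _ hb
  have hbint : Integrable (b.indicator fun _ => (1 : ℝ)) μ := (integrable_const 1).indicator hbΩ
  refine ae_eq_condExp_of_forall_setIntegral_eq hAG hbint
    (fun s _ _ => integrable_condExp.integrableOn) (fun s hs _ => ?_)
    (StronglyMeasurable.aestronglyMeasurable (stronglyMeasurable_condExp.mono le_sup_right))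
  -- π-system of rectangles
  set pi : Set (Set Ω) := {t | ∃ a g, MeasurableSet[A] a ∧ MeasurableSet[G] g ∧ t = a ∩ g}
    with hpi_def
  have h_eq : A ⊔ G = MeasurableSpace.generateFrom pi := by
    refine le_antisymm (sup_le ?_ ?_) (MeasurableSpace.generateFrom_le ?_)
    · exact fun t ht => MeasurableSpace.measurableSet_generateFrom
        ⟨t, Set.univ, ht, MeasurableSet.univ, (Set.inter_univ t).symm⟩
    · exact fun t ht => MeasurableSpace.measurableSet_generateFrom
        ⟨Set.univ, t, MeasurableSet.univ, ht, (Set.univ_inter t).symm⟩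
    · rintro t ⟨a, g, ha, hg, rfl⟩
      exact ((le_sup_left : A ≤ A ⊔ G) _ ha).inter ((le_sup_right : G ≤ A ⊔ G) _ hg)
  have hpi : IsPiSystem pi := by
    rintro t1 ⟨a1, g1, ha1, hg1, rfl⟩ t2 ⟨a2, g2, ha2, hg2, rfl⟩ _
    exact ⟨a1 ∩ a2, g1 ∩ g2, ha1.inter ha2, hg1.inter hg2, by ext x; simp [Set.mem_inter_iff]; tauto⟩
  refine aux_setIntegral_eq_of_pi hAG h_eq hpi integrable_condExp hbint
    (integral_condExp hG) ?_ hs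
  rintro t ⟨a, g, ha, hg, rfl⟩
  have haΩ : MeasurableSet[mΩ] a := hA _ ha
  have hgΩ : MeasurableSet[mΩ] g := hG _ hg
  have hagΩ : MeasurableSet[mΩ] (a ∩ g) := haΩ.inter hgΩ
  have haint : Integrable (a.indicator fun _ => (1 : ℝ)) μ := (integrable_const 1).indicator haΩ
  have habΩ : MeasurableSet[mΩ] (a ∩ b) := haΩ.inter hbΩ
  have habint : Integrable ((a ∩ b).indicator fun _ => (1 : ℝ)) μ :=
    (integrable_const 1).indicator habΩ
  -- split indicators
  have hsplit : ∀ (F : Ω → ℝ) (x), (a ∩ g).indicator (fun _ => (1 : ℝ)) x * F x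
      = (g.indicator (fun _ => (1 : ℝ)) x * F x) * a.indicator (fun _ => (1 : ℝ)) x := by
    intro F x
    by_cases hxa : x ∈ a <;> by_cases hxg : x ∈ g <;>
      simp [Set.indicator_apply, hxa, hxg, Set.mem_inter_iff]
  -- LHS
  have hL : ∫ x in a ∩ g, (μ⟦b|G⟧) x ∂μ
      = ∫ x, (g.indicator (fun _ => (1 : ℝ)) x * (μ⟦b|G⟧) x) * (μ⟦a|G⟧) x ∂μ := by
    rw [aux_setIntegral_eq hagΩ]
    rw [integral_congr_ae (ae_of_all _ (hsplit (μ⟦b|G⟧)))]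
    have hh : StronglyMeasurable[G] (fun x => g.indicator (fun _ => (1:ℝ)) x * (μ⟦b|G⟧) x) :=
      (aux_indicator_sm hg).mul stronglyMeasurable_condExp
    refine aux_pullout hG hh ?_ haint
    refine aux_int_mul_right ?_
      ((aux_indicator_sm ha).mono hA).aestronglyMeasurable (aux_indicator_bd a)
    exact aux_int_mul_left integrable_condExp
      ((aux_indicator_sm hg).mono hG).aestronglyMeasurable (aux_indicator_bd g)
  -- RHS
  have hind_ab : ∀ x, (a ∩ g).indicator (fun _ => (1 : ℝ)) x * b.indicator (fun _ => (1 : ℝ)) x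
      = g.indicator (fun _ => (1 : ℝ)) x * (a ∩ b).indicator (fun _ => (1 : ℝ)) x := by
    intro x
    by_cases hxa : x ∈ a <;> by_cases hxg : x ∈ g <;> by_cases hxb : x ∈ b <;>
      simp [Set.indicator_apply, hxa, hxg, hxb, Set.mem_inter_iff]
  have hR : ∫ x in a ∩ g, b.indicator (fun _ => (1 : ℝ)) x ∂μ
      = ∫ x, g.indicator (fun _ => (1 : ℝ)) x * (μ⟦a ∩ b|G⟧) x ∂μ := by
    rw [aux_setIntegral_eq hagΩ, integral_congr_ae (ae_of_all _ hind_ab)]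
    refine aux_pullout hG (aux_indicator_sm hg) ?_ habint
    exact aux_int_mul_left habint
      ((aux_indicator_sm hg).mono hG).aestronglyMeasurable (aux_indicator_bd g)
  -- conditional independence
  have hci : (μ⟦a ∩ b|G⟧) =ᵐ[μ] (μ⟦a|G⟧) * (μ⟦b|G⟧) :=
    ((condIndep_iff G A B hG hA hB μ).mp hCI) a b ha hb
  rw [hL, hR]
  refine integral_congr_ae ?_
  filter_upwards [hci] with x hx
  simp only [Pi.mul_apply] at hx
  rw [hx]
  ring

/-- Main conditional-independence lemma: `E[V | B ⊔ G] = E[V | G]` a.e. -/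
lemma aux_condexp_sup {A B G mΩ : MeasurableSpace Ω} [StandardBorelSpace Ω] {μ : Measure Ω}
    [IsProbabilityMeasure μ] (hA : A ≤ mΩ) (hB : B ≤ mΩ) (hG : G ≤ mΩ)
    (hCI : CondIndep G A B hG μ) {V : Ω → ℝ} (hVmeas : Measurable[A ⊔ G] V)
    (hVint : Integrable V μ) : μ[V|B ⊔ G] =ᵐ[μ] μ[V|G] := by
  have hBG : B ⊔ G ≤ mΩ := sup_le hB hG
  have hAG : A ⊔ G ≤ mΩ := sup_le hA hG
  refine (ae_eq_condExp_of_forall_setIntegral_eq hBG hVint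
    (fun s _ _ => integrable_condExp.integrableOn) (fun s hs _ => ?_)
    (StronglyMeasurable.aestronglyMeasurable (stronglyMeasurable_condExp.mono le_sup_right))).symm
  set pi : Set (Set Ω) := {t | ∃ b g, MeasurableSet[B] b ∧ MeasurableSet[G] g ∧ t = b ∩ g}
    with hpi_def
  have h_eq : B ⊔ G = MeasurableSpace.generateFrom pi := by
    refine le_antisymm (sup_le ?_ ?_) (MeasurableSpace.generateFrom_le ?_)
    · exact fun t ht => MeasurableSpace.measurableSet_generateFrom
        ⟨t, Set.univ, ht, MeasurableSet.univ, (Set.inter_univ t).symm⟩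
    · exact fun t ht => MeasurableSpace.measurableSet_generateFrom
        ⟨Set.univ, t, MeasurableSet.univ, ht, (Set.univ_inter t).symm⟩
    · rintro t ⟨b, g, hb, hg, rfl⟩
      exact ((le_sup_left : B ≤ B ⊔ G) _ hb).inter ((le_sup_right : G ≤ B ⊔ G) _ hg)
  have hpi : IsPiSystem pi := by
    rintro t1 ⟨b1, g1, hb1, hg1, rfl⟩ t2 ⟨b2, g2, hb2, hg2, rfl⟩ _
    exact ⟨b1 ∩ b2, g1 ∩ g2, hb1.inter hb2, hg1.inter hg2, by ext x; simp [Set.mem_inter_iff]; tauto⟩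
  refine aux_setIntegral_eq_of_pi hBG h_eq hpi integrable_condExp hVint
    (integral_condExp hG) ?_ hs
  rintro t ⟨b, g, hb, hg, rfl⟩
  have hbΩ : MeasurableSet[mΩ] b := hB _ hb
  have hgΩ : MeasurableSet[mΩ] g := hG _ hg
  have hbgΩ : MeasurableSet[mΩ] (b ∩ g) := hbΩ.inter hgΩ
  have hbint : Integrable (b.indicator fun _ => (1 : ℝ)) μ := (integrable_const 1).indicator hbΩ
  have hsplit : ∀ (F : Ω → ℝ) (x), (b ∩ g).indicator (fun _ => (1 : ℝ)) x * F x
      = (g.indicator (fun _ => (1 : ℝ)) x * F x) * b.indicator (fun _ => (1 : ℝ)) x := by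
    intro F x
    by_cases hxb : x ∈ b <;> by_cases hxg : x ∈ g <;>
      simp [Set.indicator_apply, hxb, hxg, Set.mem_inter_iff]
  have hbd_cb : ∀ᵐ x ∂μ, ‖(μ⟦b|G⟧) x‖ ≤ 1 := aux_condexp_indicator_bd hG hbΩ
  have hcb_sm : AEStronglyMeasurable (μ⟦b|G⟧) μ :=
    (stronglyMeasurable_condExp.mono hG).aestronglyMeasurable
  -- LHS : ∫ over b∩g of E[V|G]
  have hL : ∫ x in b ∩ g, (μ[V|G]) x ∂μ
      = ∫ x, (g.indicator (fun _ => (1 : ℝ)) x * (μ⟦b|G⟧) x) * V x ∂μ := by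
    have step1 : ∫ x in b ∩ g, (μ[V|G]) x ∂μ
        = ∫ x, (g.indicator (fun _ => (1 : ℝ)) x * (μ[V|G]) x) * (μ⟦b|G⟧) x ∂μ := by
      rw [aux_setIntegral_eq hbgΩ, integral_congr_ae (ae_of_all _ (hsplit (μ[V|G])))]
      have hh : StronglyMeasurable[G] (fun x => g.indicator (fun _ => (1:ℝ)) x * (μ[V|G]) x) :=
        (aux_indicator_sm hg).mul stronglyMeasurable_condExp
      refine aux_pullout hG hh ?_ hbint
      refine aux_int_mul_right ?_
        ((aux_indicator_sm hb).mono hB).aestronglyMeasurable (aux_indicator_bd b)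
      exact aux_int_mul_left integrable_condExp
        ((aux_indicator_sm hg).mono hG).aestronglyMeasurable (aux_indicator_bd g)
    have step2 : ∫ x, (g.indicator (fun _ => (1 : ℝ)) x * (μ⟦b|G⟧) x) * V x ∂μ
        = ∫ x, (g.indicator (fun _ => (1 : ℝ)) x * (μ⟦b|G⟧) x) * (μ[V|G]) x ∂μ := by
      have hh : StronglyMeasurable[G] (fun x => g.indicator (fun _ => (1:ℝ)) x * (μ⟦b|G⟧) x) :=
        (aux_indicator_sm hg).mul stronglyMeasurable_condExp
      refine aux_pullout hG hh ?_ hVint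
      refine aux_int_mul_left hVint
        (((aux_indicator_sm hg).mono hG).aestronglyMeasurable.mul hcb_sm) ?_
      filter_upwards [aux_indicator_bd (μ := μ) g, hbd_cb] with x h1 h2
      calc ‖g.indicator (fun _ => (1:ℝ)) x * (μ⟦b|G⟧) x‖
          = ‖g.indicator (fun _ => (1:ℝ)) x‖ * ‖(μ⟦b|G⟧) x‖ := norm_mul _ _
        _ ≤ 1 * 1 := by gcongr
        _ = 1 := one_mul 1
    rw [step1, step2]
    refine integral_congr_ae (ae_of_all _ fun x => ?_)
    ring
  -- RHS : ∫ over b∩g of V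
  have hR : ∫ x in b ∩ g, V x ∂μ
      = ∫ x, (g.indicator (fun _ => (1 : ℝ)) x * (μ⟦b|G⟧) x) * V x ∂μ := by
    have hUint : Integrable (fun x => (g.indicator (fun _ => (1:ℝ)) x * V x)) μ :=
      aux_int_mul_left hVint
        ((aux_indicator_sm hg).mono hG).aestronglyMeasurable (aux_indicator_bd g)
    have step1 : ∫ x in b ∩ g, V x ∂μ
        = ∫ x, (g.indicator (fun _ => (1 : ℝ)) x * V x) * (μ[b.indicator (fun _ => (1:ℝ))|A ⊔ G]) x ∂μ := by
      rw [aux_setIntegral_eq hbgΩ, integral_congr_ae (ae_of_all _ (hsplit V))]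
      have hh : StronglyMeasurable[A ⊔ G] (fun x => g.indicator (fun _ => (1:ℝ)) x * V x) :=
        Measurable.stronglyMeasurable
          ((measurable_const.indicator ((le_sup_right : G ≤ A ⊔ G) _ hg)).mul hVmeas)
      refine aux_pullout hAG hh ?_ hbint
      exact aux_int_mul_right hUint
        ((aux_indicator_sm hb).mono hB).aestronglyMeasurable (aux_indicator_bd b)
    rw [step1]
    have hcore := aux_core hA hB hG hCI hb
    refine integral_congr_ae ?_
    filter_upwards [hcore] with x hx
    rw [← hx]
    ring
  rw [hL, hR]

end Main

/-- If the σ-algebras `A` and `B` are conditionally independent given `G`, `ℓ` is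
convex, `W` is `B ⊔ G`-measurable and integrable, `V` is `A ⊔ G`-measurable and integrable,
and `ℓ(W − V)`, `ℓ(W − E[V|G])` are integrable, then
`E[ℓ(W − V)] ≥ E[ℓ(W − E[V|G])]`. -/
theorem statement14 {Ω : Type*} {mΩ : MeasurableSpace Ω} [StandardBorelSpace Ω]
    (μ : Measure Ω) [IsProbabilityMeasure μ]
    (A B G : MeasurableSpace Ω) (hA : A ≤ mΩ) (hB : B ≤ mΩ) (hG : G ≤ mΩ)
    (hCI : CondIndep G A B hG μ)
    (ℓ : ℝ → ℝ) (hℓ : ConvexOn ℝ Set.univ ℓ)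
    (W V : Ω → ℝ)
    (hWmeas : Measurable[B ⊔ G] W) (hWint : Integrable W μ)
    (hVmeas : Measurable[A ⊔ G] V) (hVint : Integrable V μ)
    (hint1 : Integrable (fun ω => ℓ (W ω - V ω)) μ)
    (hint2 : Integrable (fun ω => ℓ (W ω - (μ[V|G]) ω)) μ) :
    ∫ ω, ℓ (W ω - (μ[V|G]) ω) ∂μ ≤ ∫ ω, ℓ (W ω - V ω) ∂μ := by
  have hBG : B ⊔ G ≤ mΩ := sup_le hB hG
  have hfint : Integrable (fun ω => W ω - V ω) μ := hWint.sub hVint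
  -- E[W - V | B ⊔ G] = W - E[V|G] a.e.
  have hW : μ[W|B ⊔ G] = W :=
    condExp_of_stronglyMeasurable hBG hWmeas.stronglyMeasurable hWint
  have hVsup : μ[V|B ⊔ G] =ᵐ[μ] μ[V|G] := aux_condexp_sup hA hB hG hCI hVmeas hVint
  have hkey : (μ[fun ω => W ω - V ω|B ⊔ G]) =ᵐ[μ] fun ω => W ω - (μ[V|G]) ω := by
    have hsub : (μ[fun ω => W ω - V ω|B ⊔ G]) =ᵐ[μ] μ[W|B ⊔ G] - μ[V|B ⊔ G] :=
      condExp_sub hWint hVint _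
    filter_upwards [hsub, hVsup] with ω h1 h2
    rw [h1, Pi.sub_apply, hW, h2]
  have hjensen := aux_cond_jensen hBG hℓ hfint hint1
  have hle : ∀ᵐ ω ∂μ, ℓ (W ω - (μ[V|G]) ω) ≤ (μ[fun ω => ℓ (W ω - V ω)|B ⊔ G]) ω := by
    filter_upwards [hjensen, hkey] with ω h1 h2
    rw [← h2]
    exact h1
  have hint2' : Integrable (fun ω => ℓ (W ω - (μ[V|G]) ω)) μ := hint2
  calc ∫ ω, ℓ (W ω - (μ[V|G]) ω) ∂μ
      ≤ ∫ ω, (μ[fun ω => ℓ (W ω - V ω)|B ⊔ G]) ω ∂μ :=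
        integral_mono_ae hint2' integrable_condExp hle
    _ = ∫ ω, ℓ (W ω - V ω) ∂μ := integral_condExp hBG
end

section
/- Let Θ ⊆ ℝ^p be nonempty and compact, θ⁰ ∈ Θ, and L > 0. Let H : Θ → ℝ be L-Lipschitz with θ⁰ its unique minimizer (H(θ⁰) < H(θ) for all θ ∈ Θ with θ ≠ θ⁰). Let (Ω, F, P) be a probability space and for each n let Ĥ_n : Ω × Θ → ℝ be such that θ ↦ Ĥ_n(ω, θ) is L-Lipschitz for every ω, ω ↦ Ĥ_n(ω, θ) is measurable for every θ, and for every θ ∈ Θ, Ĥ_n(·, θ) → H(θ) in probability as n → ∞. Let θ̂_n : Ω → Θ be measurable with Ĥ_n(ω, θ̂_n(ω)) = min_{θ ∈ Θ} Ĥ_n(ω, θ) for all ω. Then θ̂_n → θ⁰ in probability, i.e., for every ε > 0, P(‖θ̂_n − θ⁰‖ > ε) → 0. Moreover, if φ : ℝ^d → ℝ^p is bounded, then sup_{x ∈ ℝ^d} |φ(x)ᵀθ̂_n − φ(x)ᵀθ⁰| → 0 in probability. -/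
open MeasureTheory Filter
open scoped RealInnerProductSpace

/-- M-estimation consistency: if `H` is `L`-Lipschitz on the compact set `Θ` with
unique minimizer `θ⁰`, the random functions `Ĥ_n` are `L`-Lipschitz in `θ`, measurable in `ω`,
and converge to `H` pointwise in probability, then any measurable minimizers `θ̂_n` converge to
`θ⁰` in probability; moreover for bounded `φ`, `sup_x |φ(x)ᵀθ̂_n − φ(x)ᵀθ⁰| → 0` in
probability. -/
theorem statement15 {Ω : Type*} [MeasurableSpace Ω] (μ : Measure Ω) [IsProbabilityMeasure μ]
    {p d : ℕ} (Θ : Set (EuclideanSpace ℝ (Fin p)))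
    (hΘne : Θ.Nonempty) (hΘcomp : IsCompact Θ)
    (θ0 : EuclideanSpace ℝ (Fin p)) (hθ0 : θ0 ∈ Θ)
    (L : NNReal) (hL : 0 < L)
    (H : EuclideanSpace ℝ (Fin p) → ℝ) (hHlip : LipschitzOnWith L H Θ)
    (hHmin : ∀ θ ∈ Θ, θ ≠ θ0 → H θ0 < H θ)
    (Hn : ℕ → Ω → EuclideanSpace ℝ (Fin p) → ℝ)
    (hHnlip : ∀ n ω, LipschitzOnWith L (Hn n ω) Θ)
    (hHnmeas : ∀ n θ, Measurable (fun ω => Hn n ω θ))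
    (hHnconv : ∀ θ ∈ Θ, ∀ ε > (0 : ℝ),
      Tendsto (fun n => μ {ω | ε < |Hn n ω θ - H θ|}) atTop (nhds 0))
    (θhat : ℕ → Ω → EuclideanSpace ℝ (Fin p))
    (hθhatmeas : ∀ n, Measurable (θhat n))
    (hθhatmem : ∀ n ω, θhat n ω ∈ Θ)
    (hθhatmin : ∀ n ω, ∀ θ ∈ Θ, Hn n ω (θhat n ω) ≤ Hn n ω θ) :
    (∀ ε > (0 : ℝ),
      Tendsto (fun n => μ {ω | ε < ‖θhat n ω - θ0‖}) atTop (nhds 0)) ∧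
    ∀ φ : (Fin d → ℝ) → EuclideanSpace ℝ (Fin p), (∃ M, ∀ x, ‖φ x‖ ≤ M) →
      ∀ ε > (0 : ℝ),
        Tendsto (fun n =>
          μ {ω | ε < ⨆ x : Fin d → ℝ, |⟪φ x, θhat n ω⟫ - ⟪φ x, θ0⟫|}) atTop (nhds 0) := by
  have key : ∀ ε > (0 : ℝ),
      Tendsto (fun n => μ {ω | ε < ‖θhat n ω - θ0‖}) atTop (nhds 0) := by
    intro ε hε
    set K : Set (EuclideanSpace ℝ (Fin p)) := Θ ∩ {θ | ε ≤ ‖θ - θ0‖} with hKdef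
    by_cases hKne : K.Nonempty
    · -- main case
      have hKcl : IsClosed {θ : EuclideanSpace ℝ (Fin p) | ε ≤ ‖θ - θ0‖} :=
        isClosed_le continuous_const ((continuous_id.sub continuous_const).norm)
      have hKcomp : IsCompact K := hΘcomp.inter_right hKcl
      have hHcont : ContinuousOn H K :=
        hHlip.continuousOn.mono Set.inter_subset_left
      obtain ⟨θs, hθsK, hθsmin⟩ := hKcomp.exists_isMinOn hKne hHcont
      have hθsΘ : θs ∈ Θ := hθsK.1
      have hθsne : θs ≠ θ0 := by
        intro h
        have h2 : ε ≤ ‖θs - θ0‖ := hθsK.2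
        rw [h, sub_self, norm_zero] at h2
        linarith
      have hgap : 0 < H θs - H θ0 := sub_pos.mpr (hHmin θs hθsΘ hθsne)
      set δ : ℝ := (H θs - H θ0) / 3 with hδdef
      have hδpos : 0 < δ := by positivity
      set r : ℝ := δ / (2 * L) with hrdef
      have hLpos : (0 : ℝ) < (L : ℝ) := by exact_mod_cast hL
      have hrpos : 0 < r := by positivity
      have hLr : (L : ℝ) * r = δ / 2 := by
        rw [hrdef]; field_simp
      obtain ⟨t, htsub, htfin, htcover⟩ :=
        totallyBounded_iff_subset.mp hΘcomp.totallyBounded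
          {q : (EuclideanSpace ℝ (Fin p)) × _ | dist q.1 q.2 < r}
          (Metric.dist_mem_uniformity hrpos)
      set T := htfin.toFinset with hTdef
      have claim : ∀ n ω, ε < ‖θhat n ω - θ0‖ →
          (δ / 2 < |Hn n ω θ0 - H θ0|) ∨ ∃ θi ∈ T, δ / 2 < |Hn n ω θi - H θi| := by
        intro n ω hω
        set θh := θhat n ω with hθh
        have hθhΘ : θh ∈ Θ := hθhatmem n ω
        have hθhK : θh ∈ K := ⟨hθhΘ, le_of_lt hω⟩
        have hHθh : H θs ≤ H θh := hθsmin hθhK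
        obtain ⟨θi, hθit, hθidist⟩ := Set.mem_iUnion₂.mp (htcover hθhΘ)
        have hθiΘ : θi ∈ Θ := htsub hθit
        have hθiT : θi ∈ T := htfin.mem_toFinset.mpr hθit
        have hdist : dist θh θi < r := hθidist
        have h1 : |H θh - H θi| ≤ δ / 2 := by
          have := hHlip.dist_le_mul θh hθhΘ θi hθiΘ
          rw [Real.dist_eq] at this
          calc |H θh - H θi| ≤ (L : ℝ) * dist θh θi := this
            _ ≤ (L : ℝ) * r := by
                exact mul_le_mul_of_nonneg_left hdist.le hLpos.le
            _ = δ / 2 := hLr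
        have h2 : |Hn n ω θi - Hn n ω θh| ≤ δ / 2 := by
          have := (hHnlip n ω).dist_le_mul θi hθiΘ θh hθhΘ
          rw [Real.dist_eq] at this
          calc |Hn n ω θi - Hn n ω θh| ≤ (L : ℝ) * dist θi θh := this
            _ ≤ (L : ℝ) * r := by
                rw [dist_comm]
                exact mul_le_mul_of_nonneg_left hdist.le hLpos.le
            _ = δ / 2 := hLr
        have h3 : Hn n ω θh ≤ Hn n ω θ0 := hθhatmin n ω θ0 hθ0
        have h4 : 3 * δ ≤ H θh - H θ0 := by
          rw [hδdef]; linarith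
        by_contra hcon
        push_neg at hcon
        obtain ⟨hc1, hc2⟩ := hcon
        have hc3 : |Hn n ω θi - H θi| ≤ δ / 2 := hc2 θi hθiT
        have e1 := abs_le.mp h1
        have e2 := abs_le.mp h2
        have e3 := abs_le.mp hc3
        have e4 := abs_le.mp hc1
        linarith [e1.1, e1.2, e2.1, e2.2, e3.1, e3.2, e4.1, e4.2]
      have bound : ∀ n, μ {ω | ε < ‖θhat n ω - θ0‖} ≤
          μ {ω | δ / 2 < |Hn n ω θ0 - H θ0|} +
            ∑ θi ∈ T, μ {ω | δ / 2 < |Hn n ω θi - H θi|} := by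
        intro n
        have hsub : {ω | ε < ‖θhat n ω - θ0‖} ⊆
            {ω | δ / 2 < |Hn n ω θ0 - H θ0|} ∪
              ⋃ θi ∈ T, {ω | δ / 2 < |Hn n ω θi - H θi|} := by
          intro ω hω
          rcases claim n ω hω with h | ⟨θi, hi, h⟩
          · exact Or.inl h
          · exact Or.inr (Set.mem_biUnion hi h)
        calc μ {ω | ε < ‖θhat n ω - θ0‖} ≤ _ := measure_mono hsub
          _ ≤ μ {ω | δ / 2 < |Hn n ω θ0 - H θ0|} +
              μ (⋃ θi ∈ T, {ω | δ / 2 < |Hn n ω θi - H θi|}) := measure_union_le _ _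
          _ ≤ _ := add_le_add_right (measure_biUnion_finset_le T _) _
      have h0 : Tendsto (fun n => μ {ω | δ / 2 < |Hn n ω θ0 - H θ0|}) atTop (nhds 0) :=
        hHnconv θ0 hθ0 (δ / 2) (by positivity)
      have hsum : Tendsto (fun n => ∑ θi ∈ T, μ {ω | δ / 2 < |Hn n ω θi - H θi|})
          atTop (nhds 0) := by
        have := tendsto_finset_sum T (f := fun θi n => μ {ω | δ / 2 < |Hn n ω θi - H θi|})
          (fun θi hi => hHnconv θi (htsub (htfin.mem_toFinset.mp hi)) (δ / 2) (by positivity))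
        simpa using this
      have hadd := h0.add hsum
      rw [add_zero] at hadd
      exact tendsto_of_tendsto_of_tendsto_of_le_of_le tendsto_const_nhds hadd
        (fun n => zero_le) bound
    · -- K empty
      rw [Set.not_nonempty_iff_eq_empty] at hKne
      have hempty : ∀ n, {ω | ε < ‖θhat n ω - θ0‖} = ∅ := by
        intro n
        ext ω
        simp only [Set.mem_setOf_eq, Set.mem_empty_iff_false, iff_false, not_lt]
        by_contra h
        push_neg at h
        have : θhat n ω ∈ K := ⟨hθhatmem n ω, le_of_lt h⟩
        rw [hKne] at this
        exact this
      simp only [hempty, measure_empty]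
      exact tendsto_const_nhds
  refine ⟨key, ?_⟩
  rintro φ ⟨M, hM⟩ ε hε
  set M' : ℝ := max M 1 with hM'def
  have hM'pos : 0 < M' := lt_of_lt_of_le one_pos (le_max_right _ _)
  have hM' : ∀ x, ‖φ x‖ ≤ M' := fun x => (hM x).trans (le_max_left _ _)
  have hsub : ∀ n, {ω | ε < ⨆ x : Fin d → ℝ, |⟪φ x, θhat n ω⟫ - ⟪φ x, θ0⟫|} ⊆
      {ω | ε / M' < ‖θhat n ω - θ0‖} := by
    intro n ω hω
    simp only [Set.mem_setOf_eq] at hω ⊢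
    have hbd : (⨆ x : Fin d → ℝ, |⟪φ x, θhat n ω⟫ - ⟪φ x, θ0⟫|) ≤ M' * ‖θhat n ω - θ0‖ := by
      apply ciSup_le
      intro x
      have : ⟪φ x, θhat n ω⟫ - ⟪φ x, θ0⟫ = ⟪φ x, θhat n ω - θ0⟫ := (inner_sub_right _ _ _).symm
      rw [this]
      calc |⟪φ x, θhat n ω - θ0⟫| ≤ ‖φ x‖ * ‖θhat n ω - θ0‖ := abs_real_inner_le_norm _ _
        _ ≤ M' * ‖θhat n ω - θ0‖ :=
            mul_le_mul_of_nonneg_right (hM' x) (norm_nonneg _)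
    have : ε < M' * ‖θhat n ω - θ0‖ := lt_of_lt_of_le hω hbd
    rw [div_lt_iff₀ hM'pos]
    linarith [this]
  have hkey := key (ε / M') (by positivity)
  exact tendsto_of_tendsto_of_tendsto_of_le_of_le tendsto_const_nhds hkey
    (fun n => zero_le) (fun n => measure_mono (hsub n))
end
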